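/- arXiv:1911.10485 — 9 statements merged into one kernel-verified Lean document; each statement's English description precedes it below -/
import Mathlib

section
/- Every loopless matroid M = (S, I) of rank r admits a rank preserving reduction to a partition matroid N = (S, J); that is, there exists a partition S = S_1 ∪ … ∪ S_r into r nonempty classes such that every set containing exactly one element from each class S_i is a basis of M (in particular every transversal of the partition is independent in M). -/
open Set

variable {α : Type*}

/-- The ground set of the matroid `M` can be partitioned into `k` independent sets. -/
def Matroid.IsColorable (M : Matroid α) (k : ℕ) : Prop :=
  ∃ I : Fin k → Set α, (∀ i, M.Indep (I i)) ∧ (⋃ i, I i) = M.E ∧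
    Pairwise fun i j => Disjoint (I i) (I j)

/-- The coloring number of the matroid `M`: the minimum number of independent sets into
which the ground set can be partitioned. -/
noncomputable def Matroid.chi (M : Matroid α) : ℕ := sInf {k | M.IsColorable k}

/-- The (extended, cardinality-valued) rank of the matroid `M`. -/
noncomputable def Matroid.rkE (M : Matroid α) : ℕ∞ := ⨆ I ∈ {I | M.Indep I}, I.encard

/-- `N` is the partition matroid determined by the partition `P` of its ground set:
a set is independent iff it meets every class of `P` in at most one element. -/
def Matroid.IsPartitionMatroid (N : Matroid α) (P : Set (Set α)) : Prop :=
  ⋃₀ P = N.E ∧ (∀ c ∈ P, ∀ c' ∈ P, c ≠ c' → Disjoint c c') ∧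
    ∀ X, N.Indep X ↔ X ⊆ N.E ∧ ∀ c ∈ P, (X ∩ c).encard ≤ 1

/-- `N` is a reduction of `M` (written `N ⪯ M`): every `N`-independent set is
`M`-independent. -/
def Matroid.Reduction (N M : Matroid α) : Prop :=
  N.E = M.E ∧ ∀ I, N.Indep I → M.Indep I

/-- `M` is a paving matroid of rank `r`: it has rank `r` and every subset of the ground
set of size at most `r - 1` is independent. -/
def Matroid.IsPavingOfRank (M : Matroid α) (r : ℕ) : Prop :=
  M.rkE = (r : ℕ∞) ∧ ∀ X ⊆ M.E, X.encard ≤ ((r - 1 : ℕ) : ℕ∞) → M.Indep X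

/-- A cut (cocircuit) of the matroid `M`: an inclusionwise minimal subset of the ground
set intersecting every basis. -/
def Matroid.IsCut (M : Matroid α) (X : Set α) : Prop :=
  X ⊆ M.E ∧ (∀ B, M.IsBase B → (X ∩ B).Nonempty) ∧
    ∀ Y, Y ⊂ X → ∃ B, M.IsBase B ∧ Y ∩ B = ∅

private lemma rkE_eq_encard_base {M : Matroid α} {B : Set α} (hB : M.IsBase B) :
    M.rkE = B.encard := by
  unfold Matroid.rkE
  apply le_antisymm
  · refine iSup₂_le fun I hI => ?_
    obtain ⟨B', hB', hIB'⟩ := hI.exists_isBase_superset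
    exact le_trans (Set.encard_mono hIB') (hB'.encard_eq_encard_of_isBase hB).le
  · exact le_iSup₂ (f := fun I (_ : I ∈ {I | M.Indep I}) => I.encard) B hB.indep

/-- Every loopless matroid of rank `r` admits a rank preserving reduction to a partition
matroid: there is a partition of the ground set into `r` nonempty classes such that every
set containing exactly one element from each class is a basis of `M`. -/
theorem statement_0 (M : Matroid α) (hfin : M.E.Finite)
    (hloopless : ∀ e ∈ M.E, M.Indep {e}) (r : ℕ) (hrank : M.rkE = (r : ℕ∞)) :
    ∃ P : Set (Set α), ⋃₀ P = M.E ∧ (∀ c ∈ P, ∀ c' ∈ P, c ≠ c' → Disjoint c c') ∧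
      ∅ ∉ P ∧ P.encard = (r : ℕ∞) ∧
      ∀ T ⊆ M.E, (∀ c ∈ P, (T ∩ c).encard = 1) → M.IsBase T := by
  obtain ⟨B, hB⟩ := M.exists_isBase
  have hBE : B ⊆ M.E := hB.subset_ground
  have hBfin : B.Finite := hfin.subset hBE
  have hBcard : B.encard = (r : ℕ∞) := (rkE_eq_encard_base hB).symm.trans hrank
  have hbase_card : ∀ B', M.IsBase B' → B'.encard = (r : ℕ∞) :=
    fun B' h => (h.encard_eq_encard_of_isBase hB).trans hBcard
  -- enumerate B
  have : Fintype ↥B := hBfin.fintype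
  have hcard : Fintype.card ↥B = r := by
    have h1 : B.ncard = r := by rw [Set.ncard_def, hBcard]; rfl
    rw [← Nat.card_eq_fintype_card, Nat.card_coe_set_eq, h1]
  let q : ↥B ≃ Fin r := Fintype.equivFinOfCardEq hcard
  set e : Fin r → α := fun i => (q.symm i : α) with he
  have heB : ∀ i, e i ∈ B := fun i => (q.symm i).2
  have einj : Function.Injective e := fun i j h =>
    q.symm.injective (Subtype.coe_injective h)
  have erange : Set.range e = B := by
    ext x
    constructor
    · rintro ⟨i, rfl⟩; exact heB i
    · intro hx; exact ⟨q ⟨x, hx⟩, by simp [he]⟩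
  -- the closure chain
  set C : ℕ → Set α := fun n => M.closure (e '' {i : Fin r | (i : ℕ) < n}) with hC
  have hCE : ∀ n, C n ⊆ M.E := fun n => M.closure_subset_ground _
  have hCmono : ∀ {m n : ℕ}, m ≤ n → C m ⊆ C n := fun {m n} h =>
    M.closure_subset_closure (Set.image_mono fun i hi => lt_of_lt_of_le hi h)
  have hclosure_empty : M.closure ∅ = ∅ := by
    by_contra h
    obtain ⟨x, hx⟩ := Set.nonempty_iff_ne_empty.2 h
    have hxE : x ∈ M.E := M.closure_subset_ground ∅ hx
    have hxind : M.Indep (insert x ∅) := by simpa using hloopless x hxE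
    exact ((M.empty_indep.insert_indep_iff_of_notMem (Set.notMem_empty x)).1 hxind).2 hx
  have hC0 : C 0 = ∅ := by
    have h0 : {i : Fin r | (i : ℕ) < 0} = ∅ := by simp
    simp [hC, h0, hclosure_empty]
  have hCr : C r = M.E := by
    have hu : {i : Fin r | (i : ℕ) < r} = Set.univ := by ext i; simp [i.2]
    rw [hC]
    simp only [hu, Set.image_univ, erange]
    exact hB.closure_eq
  have heC1 : ∀ i : Fin r, e i ∈ C ((i : ℕ) + 1) := by
    intro i
    refine M.subset_closure _ ?_ ⟨i, by simp, rfl⟩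
    rintro _ ⟨j, _, rfl⟩
    exact hBE (heB j)
  have heC : ∀ i : Fin r, e i ∉ C (i : ℕ) := by
    intro i hmem
    have hsub : e '' {j : Fin r | (j : ℕ) < (i : ℕ)} ⊆ B \ {e i} := by
      rintro _ ⟨j, hj, rfl⟩
      refine ⟨heB j, ?_⟩
      simp only [Set.mem_singleton_iff]
      intro h
      rw [einj h] at hj
      exact Nat.lt_irrefl _ hj
    exact hB.indep.notMem_closure_sdiff_of_mem (heB i) (M.closure_subset_closure hsub hmem)
  -- the partition classes
  set S : Fin r → Set α := fun i => C ((i : ℕ) + 1) \ C (i : ℕ) with hS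
  have hSne : ∀ i, (S i).Nonempty := fun i => ⟨e i, heC1 i, heC i⟩
  have key : ∀ i j : Fin r, (i : ℕ) < (j : ℕ) → Disjoint (S i) (S j) := fun i j h =>
    Set.disjoint_left.2 fun x hxi hxj => hxj.2 (hCmono h hxi.1)
  have hSdisj : ∀ i j : Fin r, i ≠ j → Disjoint (S i) (S j) := by
    intro i j hij
    have hne : (i : ℕ) ≠ (j : ℕ) := fun h => hij (Fin.ext h)
    rcases hne.lt_or_gt with h | h
    exacts [key i j h, (key j i h).symm]
  have Sinj : Function.Injective S := by
    intro i j h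
    by_contra hij
    have hd := hSdisj i j hij
    rw [h] at hd
    exact (hSne j).ne_empty (disjoint_self.1 hd)
  have hcover : ∀ n, n ≤ r → ∀ x ∈ C n, ∃ i : Fin r, x ∈ S i := by
    intro n
    induction n with
    | zero => intro _ x hx; rw [hC0] at hx; exact absurd hx (Set.notMem_empty x)
    | succ n ih =>
      intro hn x hx
      by_cases hxn : x ∈ C n
      · exact ih (by omega) x hxn
      · exact ⟨⟨n, by omega⟩, hx, hxn⟩
  have hUnion : (⋃ i, S i) = M.E := by
    apply subset_antisymm
    · exact Set.iUnion_subset fun i => (Set.diff_subset).trans (hCE _)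
    · intro x hx
      obtain ⟨i, hi⟩ := hcover r le_rfl x (hCr ▸ hx)
      exact Set.mem_iUnion.2 ⟨i, hi⟩
  refine ⟨Set.range S, ?_, ?_, ?_, ?_, ?_⟩
  · rw [Set.sUnion_range]; exact hUnion
  · rintro _ ⟨i, rfl⟩ _ ⟨j, rfl⟩ hne
    exact hSdisj i j (fun h => hne (by rw [h]))
  · rintro ⟨i, hi⟩
    exact (hSne i).ne_empty hi
  · rw [← Set.image_univ, Sinj.encard_image, Set.encard_univ]
    simp
  · intro T hTE hT
    have hTi : ∀ i, ∃ a, T ∩ S i = {a} := fun i => Set.encard_eq_one.1 (hT _ ⟨i, rfl⟩)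
    choose f hf using hTi
    have hfmem : ∀ i, f i ∈ T ∩ S i := fun i => by rw [hf i]; exact Set.mem_singleton _
    have hfT : ∀ i, f i ∈ T := fun i => (hfmem i).1
    have hfS : ∀ i, f i ∈ S i := fun i => (hfmem i).2
    have finj : Function.Injective f := by
      intro i j h
      by_contra hij
      exact Set.disjoint_left.1 (hSdisj i j hij) (hfS i) (h ▸ hfS j)
    have hTrange : T = Set.range f := by
      apply subset_antisymm
      · intro x hx
        obtain ⟨i, hi⟩ := hcover r le_rfl x (hCr ▸ hTE hx)
        have : x ∈ T ∩ S i := ⟨hx, hi⟩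
        rw [hf i] at this
        exact ⟨i, this.symm⟩
      · rintro _ ⟨i, rfl⟩; exact hfT i
    have hind : ∀ n, n ≤ r →
        M.Indep (f '' {i : Fin r | (i : ℕ) < n}) ∧ (f '' {i : Fin r | (i : ℕ) < n}) ⊆ C n := by
      intro n
      induction n with
      | zero =>
        intro _
        have h0 : {i : Fin r | (i : ℕ) < 0} = ∅ := by simp
        rw [h0, Set.image_empty]
        exact ⟨M.empty_indep, Set.empty_subset _⟩
      | succ n ih =>
        intro hn
        obtain ⟨hK, hKC⟩ := ih (by omega)
        have hnr : n < r := by omega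
        set i0 : Fin r := ⟨n, hnr⟩ with hi0
        have hstep : {i : Fin r | (i : ℕ) < n + 1} = insert i0 {i : Fin r | (i : ℕ) < n} := by
          ext j
          simp only [Set.mem_setOf_eq, Set.mem_insert_iff, hi0, Fin.ext_iff]
          omega
        have himg : f '' {i : Fin r | (i : ℕ) < n + 1}
            = insert (f i0) (f '' {i : Fin r | (i : ℕ) < n}) := by
          rw [hstep, Set.image_insert_eq]
        have hfi0S : f i0 ∈ S i0 := hfS i0
        have hf0nC : f i0 ∉ C n := hfi0S.2
        have hf0C : f i0 ∈ C (n + 1) := hfi0S.1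
        have hclK : M.closure (f '' {i : Fin r | (i : ℕ) < n}) ⊆ C n := by
          have h1 := M.closure_subset_closure hKC
          rwa [hC, M.closure_closure] at h1
        constructor
        · rw [himg, hK.insert_indep_iff]
          exact Or.inl ⟨hTE (hfT i0), fun h => hf0nC (hclK h)⟩
        · rw [himg]
          exact Set.insert_subset hf0C (hKC.trans (hCmono (Nat.le_succ n)))
    have hTindep : M.Indep T := by
      have h1 := (hind r le_rfl).1
      rwa [show {i : Fin r | (i : ℕ) < r} = Set.univ from by ext i; simp [i.2],
        Set.image_univ, ← hTrange] at h1
    have hTcard : T.encard = (r : ℕ∞) := by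
      rw [hTrange, ← Set.image_univ, finj.encard_image, Set.encard_univ]
      simp
    obtain ⟨B', hB', hTB'⟩ := hTindep.exists_isBase_superset
    have hB'fin : B'.Finite := hfin.subset hB'.subset_ground
    have hTeq : T = B' := (hB'fin.subset hTB').eq_of_subset_of_encard_le hTB'
      (by rw [hbase_card B' hB', hTcard])
    exact hTeq ▸ hB'
end

section
/- Let M = (S, I) be a k-colorable transversal matroid. Then there exists a k-colorable partition matroid N = (S, J) that is a rank preserving reduction of M, i.e., N ⪯_r M and χ(N) ≤ k. -/
open Set

variable {α : Type*}

/-- A `k`-colorable transversal matroid (given by a bipartite graph with left vertex type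
`α`, right vertex type `β` and edge relation `R`; independent = matchable) admits a rank
preserving reduction to a `k`-colorable partition matroid. -/
theorem statement_1 {α β : Type*} [Finite α] [Finite β] (R : α → β → Prop) (S : Set α)
    (M : Matroid α) (hE : M.E = S)
    (hInd : ∀ X, M.Indep X ↔ X ⊆ S ∧ ∃ f : α → β, Set.InjOn f X ∧ ∀ x ∈ X, R x (f x))
    (k : ℕ) (hcol : M.IsColorable k) :
    ∃ (N : Matroid α) (P : Set (Set α)), N.IsPartitionMatroid P ∧ N.Reduction M ∧
      N.rkE = M.rkE ∧ ∀ c ∈ P, c.encard ≤ (k : ℕ∞) := by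
  classical
  obtain ⟨Ii, hIind, hIunion', hIdisj⟩ := hcol
  have hIunion : (⋃ i, Ii i) = S := hIunion'.trans hE
  choose fI hfIinj hfIR using fun i => ((hInd _).mp (hIind i)).2
  obtain ⟨-, f0, -, -⟩ := (hInd ∅).mp M.empty_indep
  have hIsub : ∀ i, Ii i ⊆ S := fun i => (subset_iUnion Ii i).trans hIunion.subset
  -- a maximum independent set B with matching h
  obtain ⟨B, hB, hBmax⟩ := Set.exists_max_image {Y | M.Indep Y} Set.ncard (Set.toFinite _)
    ⟨∅, M.empty_indep⟩
  obtain ⟨hBS, h, hhinj, hhR⟩ := (hInd B).mp hB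
  -- the set of valid assignments
  set G : Set (α → β) := {g | (∀ s ∈ S, R s (g s)) ∧ ∀ i, Set.InjOn g (Ii i)} with hG
  have hg0 : (fun s => if hs : ∃ i, s ∈ Ii i then fI hs.choose s else f0 s) ∈ G := by
    have key : ∀ i, ∀ z ∈ Ii i,
        (fun s => if hs : ∃ i, s ∈ Ii i then fI hs.choose s else f0 s) z = fI i z := by
      intro i z hz
      have hs : ∃ j, z ∈ Ii j := ⟨i, hz⟩
      have hci : hs.choose = i := by
        by_contra hne
        exact Set.disjoint_left.mp (hIdisj hne) hs.choose_spec hz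
      simp only [dif_pos hs, hci]
    constructor
    · intro s hsS
      obtain ⟨i, hi⟩ := mem_iUnion.mp (hIunion.symm.subset hsS)
      rw [key i s hi]
      exact hfIR i s hi
    · intro i x hx y hy hxy
      rw [key i x hx, key i y hy] at hxy
      exact hfIinj i hx hy hxy
  obtain ⟨g, hgG, hgmax⟩ := Set.exists_max_image G (fun g => {x ∈ B | g x = h x}.ncard)
    (Set.toFinite _) ⟨_, hg0⟩
  obtain ⟨hgR, hginj⟩ := hgG
  -- key claim: the matching h lands inside g '' S
  have hkey : ∀ b ∈ B, h b ∈ g '' S := by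
    intro b hb
    by_contra hb0
    have hg'G : Function.update g b (h b) ∈ G := by
      constructor
      · intro s hsS
        rcases eq_or_ne s b with rfl | hne
        · rw [Function.update_self]; exact hhR _ hb
        · rw [Function.update_of_ne hne]; exact hgR s hsS
      · intro i x hx y hy hxy
        rcases eq_or_ne x b with hxb | hxb <;> rcases eq_or_ne y b with hyb | hyb
        · rw [hxb, hyb]
        · exfalso
          rw [hxb, Function.update_self, Function.update_of_ne hyb] at hxy
          exact hb0 ⟨y, hIsub i hy, hxy.symm⟩
        · exfalso
          rw [hyb, Function.update_of_ne hxb, Function.update_self] at hxy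
          exact hb0 ⟨x, hIsub i hx, hxy⟩
        · rw [Function.update_of_ne hxb, Function.update_of_ne hyb] at hxy
          exact hginj i hx hy hxy
    have hbnot : g b ≠ h b := fun he => hb0 ⟨b, hBS hb, he⟩
    have hsub : insert b {x ∈ B | g x = h x} ⊆ {x ∈ B | Function.update g b (h b) x = h x} := by
      rintro x hx
      rcases hx with rfl | ⟨hxB, hxe⟩
      · exact ⟨hb, by rw [Function.update_self]⟩
      · refine ⟨hxB, ?_⟩
        rcases eq_or_ne x b with rfl | hxb
        · rw [Function.update_self]
        · rw [Function.update_of_ne hxb]; exact hxe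
    have h1 : (insert b {x ∈ B | g x = h x}).ncard = {x ∈ B | g x = h x}.ncard + 1 :=
      Set.ncard_insert_of_notMem (fun hmem => hbnot hmem.2) (Set.toFinite _)
    have h2 := Set.ncard_le_ncard hsub (Set.toFinite _)
    have h3 := hgmax _ hg'G
    omega
  -- the partition matroid N
  have Naug : ∀ ⦃I J : Set α⦄, (I ⊆ S ∧ Set.InjOn g I) → (J ⊆ S ∧ Set.InjOn g J) →
      I.ncard < J.ncard → ∃ e ∈ J, e ∉ I ∧ (insert e I ⊆ S ∧ Set.InjOn g (insert e I)) := by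
    intro I J hI hJ hlt
    have h1 : (g '' I).ncard < (g '' J).ncard := by
      rwa [Set.ncard_image_of_injOn hI.2, Set.ncard_image_of_injOn hJ.2]
    have h2 : ¬ g '' J ⊆ g '' I := fun hss =>
      absurd (Set.ncard_le_ncard hss (Set.toFinite _)) (by omega)
    obtain ⟨t, htJ, htI⟩ := not_subset.mp h2
    obtain ⟨e, heJ, rfl⟩ := htJ
    have heI : e ∉ I := fun he => htI ⟨e, he, rfl⟩
    exact ⟨e, heJ, heI, insert_subset (hJ.1 heJ) hI.1,
      (Set.injOn_insert heI).mpr ⟨hI.2, htI⟩⟩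
  set N := (IndepMatroid.ofFinite (Set.toFinite S) (fun X => X ⊆ S ∧ Set.InjOn g X)
    ⟨empty_subset _, Set.injOn_empty g⟩ (fun I J hJ hIJ => ⟨hIJ.trans hJ.1, hJ.2.mono hIJ⟩)
    Naug (fun I hI => hI.1)).matroid with hN
  have hNE : N.E = S := rfl
  have hNI : ∀ X, N.Indep X ↔ X ⊆ S ∧ Set.InjOn g X := by
    intro X
    rw [hN, IndepMatroid.matroid_indep_iff, IndepMatroid.ofFinite_indep]
  set P : Set (Set α) := (fun t => S ∩ g ⁻¹' {t}) '' (g '' S) with hP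
  -- reduction
  have hred : N.Reduction M := by
    refine ⟨hNE.trans hE.symm, fun X hX => ?_⟩
    rw [hNI] at hX
    exact (hInd X).mpr ⟨hX.1, g, hX.2, fun x hx => hgR x (hX.1 hx)⟩
  -- a transversal W of the fibers
  obtain ⟨W, hWS, hWbij⟩ := Set.exists_subset_bijOn S g
  have hWinj : Set.InjOn g W := hWbij.injOn
  have hWcard : W.encard = (g '' S).encard := by
    rw [← hWinj.encard_image, hWbij.image_eq]
  have hWindepN : N.Indep W := (hNI W).mpr ⟨hWS, hWinj⟩
  have hWindepM : M.Indep W := hred.2 W hWindepN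
  -- rank computations
  have hrkN : N.rkE = (g '' S).encard := by
    apply le_antisymm
    · refine iSup₂_le fun X hX => ?_
      rw [Set.mem_setOf_eq, hNI] at hX
      rw [← hX.2.encard_image]
      exact Set.encard_le_encard (Set.image_mono hX.1)
    · rw [← hWcard]
      exact le_iSup₂_of_le W hWindepN le_rfl
  have hrkM : M.rkE = (g '' S).encard := by
    apply le_antisymm
    · refine iSup₂_le fun X hX => ?_
      have h1 : X.ncard ≤ B.ncard := hBmax X hX
      have h2 : B.ncard = (h '' B).ncard := (Set.ncard_image_of_injOn hhinj).symm
      have h3 : h '' B ⊆ g '' S := by rintro _ ⟨b, hb, rfl⟩; exact hkey b hb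
      have h4 : (h '' B).ncard ≤ (g '' S).ncard := Set.ncard_le_ncard h3 (Set.toFinite _)
      calc X.encard = (X.ncard : ℕ∞) := (Set.toFinite X).cast_ncard_eq.symm
        _ ≤ ((g '' S).ncard : ℕ∞) := Nat.cast_le.mpr (by omega)
        _ = (g '' S).encard := (Set.toFinite _).cast_ncard_eq
    · rw [← hWcard]
      exact le_iSup₂_of_le W hWindepM le_rfl
  refine ⟨N, P, ⟨?_, ?_, ?_⟩, hred, hrkN.trans hrkM.symm, ?_⟩
  · -- ⋃₀ P = N.E
    rw [hNE]
    apply subset_antisymm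
    · apply sUnion_subset
      rintro c ⟨t, ht, rfl⟩
      exact inter_subset_left
    · intro s hs
      exact ⟨S ∩ g ⁻¹' {g s}, ⟨g s, ⟨s, hs, rfl⟩, rfl⟩, hs, rfl⟩
  · -- pairwise disjoint
    rintro c ⟨t, ht, rfl⟩ c' ⟨t', ht', rfl⟩ hne
    rcases eq_or_ne t t' with rfl | htt
    · exact absurd rfl hne
    · rw [Set.disjoint_left]
      rintro x ⟨-, hx⟩ ⟨-, hx'⟩
      exact htt ((mem_singleton_iff.mp hx).symm.trans (mem_singleton_iff.mp hx'))
  · -- independence characterization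
    intro X
    rw [hNI, hNE]
    constructor
    · rintro ⟨hXS, hXinj⟩
      refine ⟨hXS, ?_⟩
      rintro c ⟨t, ht, rfl⟩
      rw [Set.encard_le_one_iff]
      rintro a b ⟨haX, -, hat⟩ ⟨hbX, -, hbt⟩
      exact hXinj haX hbX ((mem_singleton_iff.mp hat).trans (mem_singleton_iff.mp hbt).symm)
    · rintro ⟨hXS, hcl⟩
      refine ⟨hXS, ?_⟩
      intro x hx y hy hxy
      have ht : g x ∈ g '' S := ⟨x, hXS hx, rfl⟩
      have hle := hcl (S ∩ g ⁻¹' {g x}) ⟨g x, ht, rfl⟩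
      rw [Set.encard_le_one_iff] at hle
      exact hle x y ⟨hx, hXS hx, rfl⟩ ⟨hy, hXS hy, hxy.symm⟩
  · -- class sizes
    rintro c ⟨t, ht, rfl⟩
    obtain ⟨s0, hs0S, hs0t⟩ := ht
    have hne : Nonempty (Fin k) := by
      obtain ⟨i0, _⟩ := mem_iUnion.mp (hIunion.symm.subset hs0S)
      exact ⟨i0⟩
    set ι : α → Fin k := fun s => if hs : ∃ i, s ∈ Ii i then hs.choose else Classical.arbitrary _
      with hι
    have hιinj : Set.InjOn ι (S ∩ g ⁻¹' {t}) := by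
      rintro x ⟨hxS, hxt⟩ y ⟨hyS, hyt⟩ hxy
      have hxe : ∃ i, x ∈ Ii i := mem_iUnion.mp (hIunion.symm.subset hxS)
      have hye : ∃ i, y ∈ Ii i := mem_iUnion.mp (hIunion.symm.subset hyS)
      rw [hι] at hxy
      simp only [dif_pos hxe, dif_pos hye] at hxy
      have hx' : x ∈ Ii hye.choose := hxy ▸ hxe.choose_spec
      exact hginj hye.choose hx' hye.choose_spec
        ((mem_singleton_iff.mp hxt).trans (mem_singleton_iff.mp hyt).symm)
    calc (S ∩ g ⁻¹' {t}).encard = (ι '' (S ∩ g ⁻¹' {t})).encard := hιinj.encard_image.symm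
      _ ≤ (univ : Set (Fin k)).encard := Set.encard_le_encard (subset_univ _)
      _ ≤ (k : ℕ∞) := by simp [Set.encard_univ]
end

section
/- Let K_{2k} be the complete graph on 2k vertices and let M be its graphic matroid (which is k-colorable). Then every partition matroid N with N ⪯ M satisfies χ(N) ≥ 2k−1; equivalently, in any coloring of the edges of K_{2k} in which no cycle is rainbow (i.e., every cycle has two edges of the same color), some color class has at least 2k−1 edges. -/
open Set

variable {α : Type*}

lemma gallai_key {V C : Type*} [DecidableEq V] (f : V → V → C)
    (hsym : ∀ a b, f a b = f b a)
    (hgal : ∀ a b c : V, a ≠ b → b ≠ c → a ≠ c →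
      f a b = f b c ∨ f b c = f a c ∨ f a b = f a c) :
    ∀ n : ℕ, 2 ≤ n → ∀ s : Finset V, s.card = n →
      ∃ c0 : C,
        (∃ a ∈ s, ∃ b ∈ s, a ≠ b ∧ f a b = c0) ∧
        (∀ x ∈ s, ∀ y ∈ s, Relation.ReflTransGen
            (fun u w => u ∈ s ∧ w ∈ s ∧ u ≠ w ∧ f u w = c0) x y) ∧
        ∃ T : Finset (Sym2 V), T.card = n - 1 ∧
          ∀ e ∈ T, ∃ a ∈ s, ∃ b ∈ s, a ≠ b ∧ f a b = c0 ∧ e = s(a, b) := by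
  intro n
  induction n using Nat.strong_induction_on with
  | _ n IH =>
  intro hn s hs
  rcases eq_or_lt_of_le hn with h2 | h3
  · -- base case n = 2
    obtain ⟨a, b, hab, rfl⟩ := Finset.card_eq_two.mp (hs ▸ h2.symm)
    refine ⟨f a b, ⟨a, by simp, b, by simp, hab, rfl⟩, ?_, {s(a,b)}, by rw [Finset.card_singleton]; omega, ?_⟩
    · intro x hx y hy
      have ha : a ∈ ({a, b} : Finset V) := by simp
      have hb : b ∈ ({a, b} : Finset V) := by simp
      have hstep : Relation.ReflTransGen
          (fun u w => u ∈ ({a, b} : Finset V) ∧ w ∈ ({a, b} : Finset V) ∧ u ≠ w ∧ f u w = f a b) a b :=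
        Relation.ReflTransGen.single ⟨ha, hb, hab, rfl⟩
      have hstep' : Relation.ReflTransGen
          (fun u w => u ∈ ({a, b} : Finset V) ∧ w ∈ ({a, b} : Finset V) ∧ u ≠ w ∧ f u w = f a b) b a :=
        Relation.ReflTransGen.single ⟨hb, ha, hab.symm, (hsym b a).trans rfl⟩
      rcases Finset.mem_insert.mp hx with rfl | hx <;>
        rcases Finset.mem_insert.mp hy with rfl | hy <;>
        simp_all <;> first
          | exact Relation.ReflTransGen.refl
          | exact hstep
          | exact hstep'
    · intro e he
      simp only [Finset.mem_singleton] at he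
      exact ⟨a, by simp, b, by simp, hab, rfl, he⟩
  · -- inductive step, n ≥ 3
    have hsne : s.Nonempty := Finset.card_pos.mp (by omega)
    obtain ⟨v, hv⟩ := hsne
    set s' := s.erase v with hs'
    have hcard' : s'.card = n - 1 := by rw [hs', Finset.card_erase_of_mem hv, hs]
    have hsub : s' ⊆ s := Finset.erase_subset _ _
    obtain ⟨c0, ⟨a0, ha0, b0, hb0, hab0, hfab0⟩, hconn, T', hT'card, hT'⟩ :=
      IH (n - 1) (by omega) (by omega) s' hcard'
    by_cases h1 : ∃ u ∈ s', f v u = c0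
    · obtain ⟨u, hu, hfu⟩ := h1
      have hmono : ∀ x y, Relation.ReflTransGen
          (fun a b => a ∈ s' ∧ b ∈ s' ∧ a ≠ b ∧ f a b = c0) x y →
          Relation.ReflTransGen (fun a b => a ∈ s ∧ b ∈ s ∧ a ≠ b ∧ f a b = c0) x y := by
        intro x y h
        induction h with
        | refl => exact Relation.ReflTransGen.refl
        | tail _ hr ih => exact ih.tail ⟨hsub hr.1, hsub hr.2.1, hr.2.2.1, hr.2.2.2⟩
      have hvu : v ≠ u := fun h => (Finset.ne_of_mem_erase hu) h.symm
      refine ⟨c0, ⟨a0, hsub ha0, b0, hsub hb0, hab0, hfab0⟩, ?_, insert s(v, u) T', ?_, ?_⟩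
      · intro x hx y hy
        have key : ∀ z ∈ s, Relation.ReflTransGen
            (fun a b => a ∈ s ∧ b ∈ s ∧ a ≠ b ∧ f a b = c0) v z := by
          intro z hz
          by_cases hzv : z = v
          · exact hzv ▸ Relation.ReflTransGen.refl
          · have hz' : z ∈ s' := Finset.mem_erase.mpr ⟨hzv, hz⟩
            exact (Relation.ReflTransGen.single ⟨hv, hsub hu, hvu, hfu⟩).trans
              (hmono _ _ (hconn u hu z hz'))
        by_cases hxv : x = v
        · subst hxv; exact key y hy
        · by_cases hyv : y = v
          · rw [hyv]
            have hx' : x ∈ s' := Finset.mem_erase.mpr ⟨hxv, hx⟩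
            refine (hmono _ _ (hconn x hx' u hu)).trans
              (Relation.ReflTransGen.single ⟨hsub hu, hv, hvu.symm, (hsym u v).trans hfu⟩)
          · exact hmono _ _ (hconn x (Finset.mem_erase.mpr ⟨hxv, hx⟩) y (Finset.mem_erase.mpr ⟨hyv, hy⟩))
      · have hnotmem : s(v, u) ∉ T' := by
          intro hmem
          obtain ⟨a, ha, b, hb, -, -, heq⟩ := hT' _ hmem
          rw [Sym2.eq_iff] at heq
          rcases heq with ⟨rfl, rfl⟩ | ⟨rfl, rfl⟩
          · exact Finset.notMem_erase v s ha
          · exact Finset.notMem_erase v s hb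
        rw [Finset.card_insert_of_notMem hnotmem, hT'card]
        omega
      · intro e he
        rcases Finset.mem_insert.mp he with rfl | he
        · exact ⟨v, hv, u, hsub hu, hvu, hfu, rfl⟩
        · obtain ⟨a, ha, b, hb, h3, h4, h5⟩ := hT' _ he
          exact ⟨a, hsub ha, b, hsub hb, h3, h4, h5⟩
    · push_neg at h1
      -- propagation: along c0-paths in s', f v · is constant
      have hprop : ∀ x y, Relation.ReflTransGen
          (fun a b => a ∈ s' ∧ b ∈ s' ∧ a ≠ b ∧ f a b = c0) x y → f v x = f v y := by
        intro x y h
        induction h with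
        | refl => rfl
        | tail _ hstep ih =>
          obtain ⟨hu, hw, huw, hfuw⟩ := hstep
          rename_i u w _
          have hvu : v ≠ u := fun h => (Finset.ne_of_mem_erase hu) h.symm
          have hvw : v ≠ w := fun h => (Finset.ne_of_mem_erase hw) h.symm
          have := hgal u v w hvu.symm hvw huw
          -- f u v = f v w ∨ f v w = f u w ∨ f u v = f u w
          rcases this with h' | h' | h'
          · rw [ih, hsym v u, h']
          · exact absurd (h'.trans hfuw) (h1 w hw)
          · exact absurd (((hsym v u).trans h').trans hfuw) (h1 u hu)
      have hs'ne : s'.Nonempty := Finset.card_pos.mp (by omega)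
      obtain ⟨u0, hu0⟩ := hs'ne
      have hvu0 : v ≠ u0 := fun h => (Finset.ne_of_mem_erase hu0) h.symm
      have hall : ∀ u ∈ s', f v u = f v u0 := by
        intro u hu
        exact (hprop u0 u (hconn u0 hu0 u hu)).symm
      refine ⟨f v u0, ⟨v, hv, u0, hsub hu0, hvu0, rfl⟩, ?_, s'.image (fun u => s(v, u)), ?_, ?_⟩
      · intro x hx y hy
        have key : ∀ z ∈ s, Relation.ReflTransGen
            (fun a b => a ∈ s ∧ b ∈ s ∧ a ≠ b ∧ f a b = f v u0) v z := by
          intro z hz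
          by_cases hzv : z = v
          · exact hzv ▸ Relation.ReflTransGen.refl
          · have hz' : z ∈ s' := Finset.mem_erase.mpr ⟨hzv, hz⟩
            exact Relation.ReflTransGen.single ⟨hv, hz, fun h => hzv h.symm, hall z hz'⟩
        by_cases hxv : x = v
        · subst hxv; exact key y hy
        · have hx' : x ∈ s' := Finset.mem_erase.mpr ⟨hxv, hx⟩
          have step : Relation.ReflTransGen
              (fun a b => a ∈ s ∧ b ∈ s ∧ a ≠ b ∧ f a b = f v u0) x v :=
            Relation.ReflTransGen.single ⟨hx, hv, hxv, (hsym x v).trans (hall x hx')⟩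
          exact step.trans (key y hy)
      · rw [Finset.card_image_of_injOn, hcard']
        intro a ha b hb hab
        have ha' : a ∈ s' := ha
        rw [Sym2.eq_iff] at hab
        rcases hab with ⟨-, h⟩ | ⟨h, h'⟩
        · exact h
        · exact absurd h' (Finset.ne_of_mem_erase ha')
      · intro e he
        obtain ⟨u, hu, rfl⟩ := Finset.mem_image.mp he
        exact ⟨v, hv, u, hsub hu, fun h => (Finset.ne_of_mem_erase hu) h.symm, hall u hu, rfl⟩

/-- For the graphic matroid `M` of the complete graph on `2k` vertices, every partition
matroid `N` with `N ⪯ M` has a partition class of size at least `2k - 1`. -/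
theorem statement_3 (k : ℕ) (hk : 1 ≤ k) (M : Matroid (Sym2 (Fin (2 * k))))
    (hE : M.E = (⊤ : SimpleGraph (Fin (2 * k))).edgeSet)
    (hInd : ∀ F : Set (Sym2 (Fin (2 * k))),
      M.Indep F ↔ F ⊆ M.E ∧ (SimpleGraph.fromEdgeSet F).IsAcyclic)
    (N : Matroid (Sym2 (Fin (2 * k)))) (P : Set (Set (Sym2 (Fin (2 * k)))))
    (hN : N.IsPartitionMatroid P) (hred : N.Reduction M) :
    ∃ c ∈ P, ((2 * k - 1 : ℕ) : ℕ∞) ≤ c.encard := by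
  classical
  obtain ⟨hcover, hdisj, hindep⟩ := hN
  obtain ⟨hEE, hredI⟩ := hred
  have hedge : ∀ a b : Fin (2 * k), a ≠ b → s(a, b) ∈ N.E := by
    intro a b hab
    rw [hEE, hE, SimpleGraph.mem_edgeSet, SimpleGraph.top_adj]
    exact hab
  have hex : ∀ a b : Fin (2 * k), a ≠ b → ∃ p ∈ P, s(a, b) ∈ p := by
    intro a b hab
    have h := hedge a b hab
    rw [← hcover] at h
    exact h
  set g : Sym2 (Fin (2 * k)) → Set (Sym2 (Fin (2 * k))) :=
    fun e => if h : ∃ p ∈ P, e ∈ p then h.choose else ∅ with hg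
  have hgP : ∀ e, (∃ p ∈ P, e ∈ p) → g e ∈ P ∧ e ∈ g e := by
    intro e h
    rw [hg]
    simp only [dif_pos h]
    exact ⟨h.choose_spec.1, h.choose_spec.2⟩
  set f : Fin (2 * k) → Fin (2 * k) → Set (Sym2 (Fin (2 * k))) :=
    fun a b => g s(a, b) with hf
  have hsym : ∀ a b, f a b = f b a := by
    intro a b
    rw [hf]
    simp only
    rw [Sym2.eq_swap]
  have hfP : ∀ a b : Fin (2 * k), a ≠ b → f a b ∈ P ∧ s(a, b) ∈ f a b :=
    fun a b hab => hgP _ (hex a b hab)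
  have huniq : ∀ (a b : Fin (2 * k)), a ≠ b → ∀ p ∈ P, s(a, b) ∈ p → p = f a b := by
    intro a b hab p hp hmem
    by_contra hne
    exact Set.disjoint_left.mp (hdisj p hp (f a b) (hfP a b hab).1 hne) hmem (hfP a b hab).2
  have hgal : ∀ a b c : Fin (2 * k), a ≠ b → b ≠ c → a ≠ c →
      f a b = f b c ∨ f b c = f a c ∨ f a b = f a c := by
    intro a b c hab hbc hac
    by_contra hcon
    push_neg at hcon
    obtain ⟨h1, h2, h3⟩ := hcon
    set X : Set (Sym2 (Fin (2 * k))) := {s(a, b), s(b, c), s(a, c)} with hX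
    have hmab : s(a, b) ∈ X := by rw [hX]; left; rfl
    have hmbc : s(b, c) ∈ X := by rw [hX]; right; left; rfl
    have hmac : s(a, c) ∈ X := by rw [hX]; right; right; rfl
    have hXE : X ⊆ N.E := by
      intro e he
      rw [hX, Set.mem_insert_iff, Set.mem_insert_iff, Set.mem_singleton_iff] at he
      rcases he with rfl | rfl | rfl
      exacts [hedge a b hab, hedge b c hbc, hedge a c hac]
    have hNX : N.Indep X := by
      rw [hindep]
      refine ⟨hXE, ?_⟩
      intro p hp
      rw [Set.encard_le_one_iff]
      have key : ∀ e ∈ X ∩ p,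
          e = s(a, b) ∧ p = f a b ∨ e = s(b, c) ∧ p = f b c ∨ e = s(a, c) ∧ p = f a c := by
        intro e he
        obtain ⟨heX, hep⟩ := he
        rw [hX, Set.mem_insert_iff, Set.mem_insert_iff, Set.mem_singleton_iff] at heX
        rcases heX with rfl | rfl | rfl
        · exact Or.inl ⟨rfl, huniq a b hab p hp hep⟩
        · exact Or.inr (Or.inl ⟨rfl, huniq b c hbc p hp hep⟩)
        · exact Or.inr (Or.inr ⟨rfl, huniq a c hac p hp hep⟩)
      intro e1 e2 he1 he2
      rcases key e1 he1 with ⟨q1, r1⟩ | ⟨q1, r1⟩ | ⟨q1, r1⟩ <;>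
        rcases key e2 he2 with ⟨q2, r2⟩ | ⟨q2, r2⟩ | ⟨q2, r2⟩
      · rw [q1, q2]
      · exact absurd (r1.symm.trans r2) h1
      · exact absurd (r1.symm.trans r2) h3
      · exact absurd (r1.symm.trans r2) h1.symm
      · rw [q1, q2]
      · exact absurd (r1.symm.trans r2) h2
      · exact absurd (r1.symm.trans r2) h3.symm
      · exact absurd (r1.symm.trans r2) h2.symm
      · rw [q1, q2]
    have hacy := ((hInd X).mp (hredI X hNX)).2
    have hadjab : (SimpleGraph.fromEdgeSet X).Adj a b := by
      rw [SimpleGraph.fromEdgeSet_adj]; exact ⟨hmab, hab⟩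
    have hbridge := (SimpleGraph.isAcyclic_iff_forall_adj_isBridge.mp hacy) hadjab
    rw [SimpleGraph.isBridge_iff] at hbridge
    apply hbridge
    have hadj1 : (SimpleGraph.fromEdgeSet X \ SimpleGraph.fromEdgeSet {s(a, b)}).Adj a c := by
      rw [SimpleGraph.sdiff_adj]
      constructor
      · rw [SimpleGraph.fromEdgeSet_adj]; exact ⟨hmac, hac⟩
      · rw [SimpleGraph.fromEdgeSet_adj]
        rintro ⟨hm, -⟩
        rw [Set.mem_singleton_iff, Sym2.eq_iff] at hm
        rcases hm with ⟨-, h⟩ | ⟨h, -⟩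
        · exact hbc h.symm
        · exact hab h
    have hadj2 : (SimpleGraph.fromEdgeSet X \ SimpleGraph.fromEdgeSet {s(a, b)}).Adj c b := by
      rw [SimpleGraph.sdiff_adj]
      constructor
      · rw [SimpleGraph.fromEdgeSet_adj]
        refine ⟨?_, fun h => hbc h.symm⟩
        rw [Sym2.eq_swap]
        exact hmbc
      · rw [SimpleGraph.fromEdgeSet_adj]
        rintro ⟨hm, -⟩
        rw [Set.mem_singleton_iff, Sym2.eq_iff] at hm
        rcases hm with ⟨h, -⟩ | ⟨-, h⟩
        · exact hac h.symm
        · exact hab h.symm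
    exact hadj1.reachable.trans hadj2.reachable
  obtain ⟨c0, ⟨a0, -, b0, -, hab0, hfab0⟩, -, T, hTcard, hT⟩ :=
    gallai_key f hsym hgal (2 * k) (by omega) Finset.univ (by simp)
  refine ⟨c0, hfab0 ▸ (hfP a0 b0 hab0).1, ?_⟩
  have hTsub : (↑T : Set (Sym2 (Fin (2 * k)))) ⊆ c0 := by
    intro e he
    obtain ⟨a, -, b, -, hab, hfab, rfl⟩ := hT e he
    exact hfab ▸ (hfP a b hab).2
  calc ((2 * k - 1 : ℕ) : ℕ∞) = (↑T : Set (Sym2 (Fin (2 * k)))).encard := by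
        rw [Set.encard_coe_eq_coe_finsetCard, hTcard]
    _ ≤ c0.encard := Set.encard_le_encard hTsub
end

section
/- Let M = (S, I) be a matroid such that for every nonempty subset S' ⊆ S the restriction M|_{S'} has a cut (cocircuit) of size at most k. Then M can be reduced to a k-colorable partition matroid, i.e., there exists a partition matroid N = (S, J) with N ⪯ M and χ(N) ≤ k. -/
open Set

variable {α : Type*}

lemma cut_not_mem_closure (M : Matroid α) {X : Set α} (hX : M.IsCut X) {x : α}
    (hx : x ∈ X) : x ∉ M.closure (M.E \ X) := by
  intro hmem
  obtain ⟨hXE, hbase, hmin⟩ := hX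
  obtain ⟨B, hB, hYB⟩ := hmin (X \ {x}) (Set.sdiff_singleton_ssubset.mpr hx)
  have hBX : B ⊆ M.closure (M.E \ X) := by
    intro b hb
    by_cases hbX : b ∈ X
    · have hbx : b = x := by
        by_contra hne
        exact absurd hYB (Set.nonempty_iff_ne_empty.mp ⟨b, ⟨hbX, hne⟩, hb⟩)
      exact hbx ▸ hmem
    · exact M.subset_closure (M.E \ X) Set.diff_subset ⟨hB.subset_ground hb, hbX⟩
  have hspan : M.Spanning (M.E \ X) := by
    rw [Matroid.spanning_iff_closure_eq Set.diff_subset]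
    refine subset_antisymm (M.closure_subset_ground _) ?_
    have h2 := M.closure_subset_closure_of_subset_closure hBX
    rw [hB.closure_eq] at h2
    exact h2
  obtain ⟨B', hB', hB'sub⟩ := hspan.exists_isBase_subset
  obtain ⟨y, hyX, hyB'⟩ := hbase B' hB'
  exact (hB'sub hyB').2 hyX

lemma cut_insert_indep (M : Matroid α) {X I : Set α} (hX : M.IsCut X)
    (hI : M.Indep I) (hIX : I ⊆ M.E \ X) {x : α} (hx : x ∈ X) :
    M.Indep (insert x I) := by
  rw [hI.insert_indep_iff]
  exact Or.inl ⟨hX.1 hx,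
    fun hmem => cut_not_mem_closure M hX hx (M.closure_subset_closure hIX hmem)⟩

lemma exists_partition_aux (M : Matroid α) (k : ℕ) :
    ∀ n (S' : Set α), S'.ncard ≤ n → S' ⊆ M.E → S'.Finite →
      (∀ T ⊆ S', T.Nonempty → ∃ X, (M.restrict T).IsCut X ∧ X.encard ≤ (k : ℕ∞)) →
      ∃ P : Set (Set α), ⋃₀ P = S' ∧ (∀ c ∈ P, ∀ c' ∈ P, c ≠ c' → Disjoint c c') ∧
        (∀ c ∈ P, c.encard ≤ (k : ℕ∞)) ∧
        ∀ T ⊆ S', (∀ c ∈ P, (T ∩ c).encard ≤ 1) → M.Indep T := by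
  intro n
  induction n with
  | zero =>
    intro S' hcard _ hfin _
    have hS : S' = ∅ := by rw [← Set.ncard_eq_zero hfin]; omega
    subst hS
    exact ⟨∅, by simp, by simp, by simp, fun T hT _ => by
      rw [Set.subset_empty_iff.mp hT]; exact M.empty_indep⟩
  | succ n ih =>
    intro S' hcard hSE hfin hcut
    rcases S'.eq_empty_or_nonempty with rfl | hne
    · exact ⟨∅, by simp, by simp, by simp, fun T hT _ => by
        rw [Set.subset_empty_iff.mp hT]; exact M.empty_indep⟩
    obtain ⟨X, hXcut, hXk⟩ := hcut S' Subset.rfl hne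
    have hXS : X ⊆ S' := hXcut.1
    have hXne : X.Nonempty := by
      obtain ⟨B, hB⟩ := (M.restrict S').exists_isBase
      obtain ⟨y, hy, _⟩ := hXcut.2.1 B hB
      exact ⟨y, hy⟩
    have hss : S' \ X ⊂ S' := by
      obtain ⟨x, hx⟩ := hXne
      exact ⟨Set.diff_subset, fun h => (h (hXS hx)).2 hx⟩
    have hlt : (S' \ X).ncard < S'.ncard := Set.ncard_lt_ncard hss hfin
    obtain ⟨P', hPU, hPdisj, hPk, hPind⟩ := ih (S' \ X) (by omega)
      (Set.diff_subset.trans hSE) (hfin.subset Set.diff_subset)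
      (fun T hT hTne => hcut T (hT.trans Set.diff_subset) hTne)
    have hcsub : ∀ c ∈ P', c ⊆ S' \ X := fun c hc => hPU ▸ Set.subset_sUnion_of_mem hc
    refine ⟨insert X P', ?_, ?_, ?_, ?_⟩
    · rw [Set.sUnion_insert, hPU, Set.union_diff_cancel hXS]
    · rintro c (rfl | hc) c' (rfl | hc') hne'
      · exact absurd rfl hne'
      · exact (Set.disjoint_sdiff_right.mono_right (hcsub c' hc'))
      · exact (Set.disjoint_sdiff_right.mono_right (hcsub c hc)).symm
      · exact hPdisj c hc c' hc' hne'
    · rintro c (rfl | hc)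
      · exact hXk
      · exact hPk c hc
    · intro T hT hTone
      have hT1 : T \ X ⊆ S' \ X := Set.diff_subset_diff_left hT
      have hind : M.Indep (T \ X) := hPind (T \ X) hT1 (fun c hc =>
        le_trans (Set.encard_mono (Set.inter_subset_inter_left c Set.diff_subset))
          (hTone c (Set.mem_insert_of_mem _ hc)))
      have hX1 : (T ∩ X).encard ≤ 1 := hTone X (Set.mem_insert _ _)
      rcases (T ∩ X).eq_empty_or_nonempty with he | ⟨x, hx⟩
      · have hdj : Disjoint T X := Set.disjoint_iff_inter_eq_empty.mpr he
        rwa [sdiff_eq_left.mpr hdj] at hind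
      · have hxall : ∀ y ∈ T ∩ X, y = x := fun y hy =>
          Set.encard_le_one_iff.mp hX1 y x hy hx
        have hTeq : T = insert x (T \ X) := by
          ext y
          constructor
          · intro hyT
            by_cases hyX : y ∈ X
            · exact (hxall y ⟨hyT, hyX⟩) ▸ Set.mem_insert _ _
            · exact Set.mem_insert_of_mem _ ⟨hyT, hyX⟩
          · rintro (rfl | ⟨h1, _⟩)
            · exact hx.1
            · exact h1
        have hres : (M.restrict S').Indep (T \ X) :=
          Matroid.restrict_indep_iff.mpr ⟨hind, Set.diff_subset.trans hT⟩
        have h2 : (M.restrict S').Indep (insert x (T \ X)) :=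
          cut_insert_indep _ hXcut hres
            (by rw [Matroid.restrict_ground_eq]; exact Set.diff_subset_diff_left hT) hx.2
        rw [← hTeq] at h2
        exact h2.of_restrict

/-- If every restriction of `M` to a nonempty subset of its ground set has a cut
(cocircuit) of size at most `k`, then `M` can be reduced to a `k`-colorable partition
matroid. -/
theorem statement_5 (M : Matroid α) (hfin : M.E.Finite) (k : ℕ)
    (hcut : ∀ S' ⊆ M.E, S'.Nonempty → ∃ X, (M.restrict S').IsCut X ∧ X.encard ≤ (k : ℕ∞)) :
    ∃ (N : Matroid α) (P : Set (Set α)), N.IsPartitionMatroid P ∧ N.Reduction M ∧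
      ∀ c ∈ P, c.encard ≤ (k : ℕ∞) := by
  classical
  obtain ⟨P, hPU, hPdisj, hPk, hPind⟩ :=
    exists_partition_aux M k M.E.ncard M.E le_rfl Subset.rfl hfin hcut
  set pred : Set α → Prop := fun I => I ⊆ M.E ∧ ∀ c ∈ P, (I ∩ c).encard ≤ 1 with hpred
  have hex : ∀ x ∈ M.E, ∃ c ∈ P, x ∈ c := by
    intro x hx
    rw [← hPU] at hx
    exact hx
  set f : α → Set α := fun x => if h : ∃ c ∈ P, x ∈ c then h.choose else ∅ with hfdef
  have hfP : ∀ x ∈ M.E, f x ∈ P ∧ x ∈ f x := by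
    intro x hx
    have h := hex x hx
    simp only [hfdef, dif_pos h]
    exact ⟨h.choose_spec.1, h.choose_spec.2⟩
  have huniq : ∀ x ∈ M.E, ∀ c ∈ P, x ∈ c → c = f x := by
    intro x hx c hc hxc
    by_contra hne
    exact (hPdisj c hc (f x) (hfP x hx).1 hne).ne_of_mem hxc (hfP x hx).2 rfl
  have indep_empty : pred ∅ := ⟨Set.empty_subset _, fun c _ => by simp⟩
  have indep_subset : ∀ ⦃I J : Set α⦄, pred J → I ⊆ J → pred I := by
    intro I J hJ hIJ
    exact ⟨hIJ.trans hJ.1, fun c hc =>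
      le_trans (Set.encard_mono (Set.inter_subset_inter_left c hIJ)) (hJ.2 c hc)⟩
  have indep_aug : ∀ ⦃I J : Set α⦄, pred I → pred J → I.ncard < J.ncard →
      ∃ e ∈ J, e ∉ I ∧ pred (insert e I) := by
    intro I J hI hJ hlt
    by_contra h
    push_neg at h
    have himg : f '' J ⊆ f '' I := by
      rintro _ ⟨e, heJ, rfl⟩
      by_cases heI : e ∈ I
      · exact ⟨e, heI, rfl⟩
      have hpf : ¬ (insert e I ⊆ M.E ∧ ∀ c ∈ P, ((insert e I) ∩ c).encard ≤ 1) :=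
        h e heJ heI
      push_neg at hpf
      obtain ⟨c, hcP, hc1⟩ := hpf (Set.insert_subset (hJ.1 heJ) hI.1)
      have hc1' : ¬ ((insert e I ∩ c).encard ≤ 1) := not_le.mpr hc1
      have hec : e ∈ c := by
        by_contra hec
        refine hc1' (le_trans (Set.encard_mono ?_) (hI.2 c hcP))
        rintro a ⟨ha, hac⟩
        rcases ha with rfl | ha
        · exact absurd hac hec
        · exact ⟨ha, hac⟩
      obtain ⟨y, hy⟩ : (I ∩ c).Nonempty := by
        rw [Set.nonempty_iff_ne_empty]
        intro hemp
        refine hc1' (le_trans (Set.encard_mono ?_) (by simp : ({e} : Set α).encard ≤ 1))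
        rintro a ⟨ha, hac⟩
        rcases ha with rfl | ha
        · rfl
        · exact absurd (Set.eq_empty_iff_forall_notMem.mp hemp a) (by simp [ha, hac])
      have h1 : c = f e := huniq e (hJ.1 heJ) c hcP hec
      have h2 : c = f y := huniq y (hI.1 hy.1) c hcP hy.2
      exact ⟨y, hy.1, by rw [← h2, h1]⟩
    have hinj : Set.InjOn f J := by
      intro a ha b hb hab
      have h1 := hfP a (hJ.1 ha)
      have h2 := hfP b (hJ.1 hb)
      refine Set.encard_le_one_iff.mp (hJ.2 (f a) h1.1) a b ⟨ha, h1.2⟩ ⟨hb, by rw [hab]; exact h2.2⟩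
    have hJcard : J.ncard = (f '' J).ncard := (Set.ncard_image_of_injOn hinj).symm
    have hle : (f '' J).ncard ≤ (f '' I).ncard :=
      Set.ncard_le_ncard himg ((hfin.subset hI.1).image f)
    have hle2 : (f '' I).ncard ≤ I.ncard := Set.ncard_image_le (hfin.subset hI.1)
    omega
  have subset_ground : ∀ ⦃I : Set α⦄, pred I → I ⊆ M.E := fun I hI => hI.1
  set N := (IndepMatroid.ofFinite hfin pred indep_empty indep_subset indep_aug
    subset_ground).matroid with hN
  have hNE : N.E = M.E := by simp [hN]
  have hNI : ∀ I, N.Indep I ↔ pred I := by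
    intro I
    simp [hN]
  refine ⟨N, P, ⟨by rw [hNE]; exact hPU, hPdisj, fun X => by rw [hNI, hNE]⟩,
    ⟨hNE, fun I hI => ?_⟩, hPk⟩
  rw [hNI] at hI
  exact hPind I hI.1 hI.2
end

section
/- Let M = (S, I) be a k-colorable paving matroid of rank r ≥ 2. Then there exists a ⌈rk/(r−1)⌉-colorable partition matroid N = (S, J) with N ⪯ M. -/
open Set

variable {α : Type*}

private lemma encard_iUnion_fin_le : ∀ (k : ℕ) (s : Fin k → Set α),
    (⋃ i, s i).encard ≤ ∑ i, (s i).encard := by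
  intro k
  induction k with
  | zero => simp
  | succ n ih =>
    intro s
    have hu : (⋃ i, s i) = s 0 ∪ ⋃ i : Fin n, s i.succ := by
      ext x
      simp [mem_iUnion, Fin.exists_fin_succ]
    rw [hu, Fin.sum_univ_succ]
    exact (encard_union_le _ _).trans (add_le_add (le_refl _) (ih _))

/-- A `k`-colorable paving matroid of rank `r ≥ 2` can be reduced to a
`⌈rk/(r-1)⌉`-colorable partition matroid. -/
theorem statement_6 (M : Matroid α) (hfin : M.E.Finite) (r k : ℕ) (hr : 2 ≤ r)
    (hpav : M.IsPavingOfRank r) (hcol : M.IsColorable k) :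
    ∃ (N : Matroid α) (P : Set (Set α)), N.IsPartitionMatroid P ∧ N.Reduction M ∧
      ∀ c ∈ P, c.encard ≤ (((r * k + r - 2) / (r - 1) : ℕ) : ℕ∞) := by
  classical
  obtain ⟨hrk, hpaving⟩ := hpav
  obtain ⟨Is, hIs, hIsE, _⟩ := hcol
  have hindep_le : ∀ I, M.Indep I → I.encard ≤ (r : ℕ∞) := by
    intro I hI
    rw [← hrk]
    exact le_iSup₂ (f := fun I (_ : I ∈ {I | M.Indep I}) => I.encard) I hI
  set d := r - 1 with hd
  set b := (r * k + r - 2) / (r - 1) with hb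
  have hd1 : 1 ≤ d := by omega
  -- |E| ≤ r * k
  have hEcard : M.E.encard ≤ ((r * k : ℕ) : ℕ∞) := by
    rw [← hIsE]
    calc (⋃ i, Is i).encard ≤ ∑ i, (Is i).encard := encard_iUnion_fin_le k Is
    _ ≤ ∑ _i : Fin k, (r : ℕ∞) := Finset.sum_le_sum fun i _ => hindep_le _ (hIs i)
    _ = ((r * k : ℕ) : ℕ∞) := by
        rw [Finset.sum_const, Finset.card_univ, Fintype.card_fin]
        push_cast
        rw [nsmul_eq_mul, mul_comm]
  set n := M.E.ncard with hnn
  have hncast : (n : ℕ∞) = M.E.encard := hfin.cast_ncard_eq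
  have hnrk : n ≤ r * k := by
    rw [← Nat.cast_le (α := ℕ∞), hncast]
    exact hEcard
  -- E is nonempty, so k ≥ 1 and b ≥ 1
  have hEne : M.E.Nonempty := by
    rw [← encard_pos]
    have hle : M.rkE ≤ M.E.encard := by
      apply iSup₂_le
      intro I hI
      exact encard_mono hI.subset_ground
    rw [hrk] at hle
    refine lt_of_lt_of_le ?_ hle
    exact_mod_cast (by omega : 0 < r)
  have hn1 : 1 ≤ n := by
    rw [hnn, Nat.one_le_iff_ne_zero, Ne, ncard_eq_zero hfin]
    exact hEne.ne_empty
  have hb1 : 1 ≤ b := by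
    rw [hb]
    have hk1 : 1 ≤ k := by nlinarith
    apply Nat.one_le_div_iff (by omega) |>.mpr
    omega
  have hnb : n ≤ d * b := by
    have hbd : b = (r * k + r - 2) / d := by rw [hb, hd]
    have h1 := Nat.div_add_mod (r * k + r - 2) d
    rw [← hbd] at h1
    have h2 : (r * k + r - 2) % d < d := Nat.mod_lt _ (by omega)
    have h3 : n ≤ r * k := hnrk
    omega
  -- enumeration of E
  set F := hfin.toFinset with hF
  have hFcard : F.card = n := by
    rw [hnn, ncard_eq_toFinset_card _ hfin]
  let e : F ≃ Fin F.card := F.equivFin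
  set g : α → ℕ := fun x => if h : x ∈ F then (e ⟨x, h⟩ : ℕ) else 0 with hg
  have hmemF : ∀ x, x ∈ F ↔ x ∈ M.E := fun x => hfin.mem_toFinset
  have hg_lt : ∀ x ∈ M.E, g x < n := by
    intro x hx
    rw [hg]
    simp only
    rw [dif_pos ((hmemF x).2 hx)]
    exact hFcard ▸ (e ⟨x, _⟩).isLt
  have hg_inj : InjOn g M.E := by
    intro x hx y hy hxy
    rw [hg] at hxy
    simp only [dif_pos ((hmemF x).2 hx), dif_pos ((hmemF y).2 hy)] at hxy
    have := e.injective (Fin.ext hxy)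
    exact Subtype.ext_iff.1 this
  set φ : α → ℕ := fun x => g x / b with hφ
  have hφ_lt : ∀ x ∈ M.E, φ x < d := by
    intro x hx
    rw [hφ]
    simp only
    rw [Nat.div_lt_iff_lt_mul (by omega)]
    calc g x < n := hg_lt x hx
    _ ≤ d * b := hnb
  set c : ℕ → Set α := fun i => {x | x ∈ M.E ∧ φ x = i} with hc
  set P : Set (Set α) := c '' (Set.Iio d) with hP
  -- the independence predicate
  set Ind : Set α → Prop := fun X => X ⊆ M.E ∧ InjOn φ X with hInd
  have ind_empty : Ind ∅ := ⟨empty_subset _, injOn_empty _⟩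
  have ind_subset : ∀ ⦃I J : Set α⦄, Ind J → I ⊆ J → Ind I := by
    rintro I J ⟨hJE, hJi⟩ hIJ
    exact ⟨hIJ.trans hJE, hJi.mono hIJ⟩
  have ind_aug : ∀ ⦃I J : Set α⦄, Ind I → Ind J → I.ncard < J.ncard →
      ∃ x ∈ J, x ∉ I ∧ Ind (insert x I) := by
    rintro I J ⟨hIE, hIi⟩ ⟨hJE, hJi⟩ hlt
    have hIfin : I.Finite := hfin.subset hIE
    have h1 : (φ '' I).ncard = I.ncard := ncard_image_of_injOn hIi
    have h2 : (φ '' J).ncard = J.ncard := ncard_image_of_injOn hJi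
    have hns : ¬ (φ '' J ⊆ φ '' I) := by
      intro hss
      have := ncard_le_ncard hss (hIfin.image φ)
      omega
    obtain ⟨v, hvJ, hvI⟩ := not_subset.mp hns
    obtain ⟨x, hxJ, hxv⟩ := hvJ
    have hxI : x ∉ I := fun h => hvI ⟨x, h, hxv⟩
    refine ⟨x, hxJ, hxI, insert_subset (hJE hxJ) hIE, ?_⟩
    intro a ha a' ha' haa
    rcases ha with rfl | ha
    · rcases ha' with rfl | ha'
      · rfl
      · exact absurd ⟨a', ha', (haa ▸ hxv : φ a' = v)⟩ hvI
    · rcases ha' with rfl | ha'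
      · exact absurd ⟨a, ha, (haa ▸ hxv ▸ rfl : φ a = v)⟩ hvI
      · exact hIi ha ha' haa
  set N := (IndepMatroid.ofFinite hfin Ind ind_empty ind_subset ind_aug
    (fun I hI => hI.1)).matroid with hN
  have hNE : N.E = M.E := rfl
  have hNindep : ∀ X, N.Indep X ↔ Ind X := fun X => Iff.rfl
  refine ⟨N, P, ⟨?_, ?_, ?_⟩, ⟨hNE, ?_⟩, ?_⟩
  · -- ⋃₀ P = N.E
    rw [hNE]
    apply subset_antisymm
    · rintro x ⟨s, ⟨i, _, rfl⟩, hx⟩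
      exact hx.1
    · intro x hx
      exact ⟨c (φ x), ⟨φ x, hφ_lt x hx, rfl⟩, hx, rfl⟩
  · -- pairwise disjoint
    rintro s ⟨i, _, rfl⟩ s' ⟨j, _, rfl⟩ hne
    rw [disjoint_left]
    rintro x ⟨_, hxi⟩ ⟨_, hxj⟩
    exact hne (hxi ▸ hxj ▸ rfl)
  · -- independence characterization
    intro X
    rw [hNindep, hNE]
    constructor
    · rintro ⟨hXE, hXi⟩
      refine ⟨hXE, ?_⟩
      rintro s ⟨i, _, rfl⟩
      rw [encard_le_one_iff]
      rintro a a' ⟨haX, _, hai⟩ ⟨ha'X, _, ha'i⟩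
      exact hXi haX ha'X (hai.trans ha'i.symm)
    · rintro ⟨hXE, hcl⟩
      refine ⟨hXE, ?_⟩
      intro a ha a' ha' haa
      have hi : φ a < d := hφ_lt a (hXE ha)
      have := hcl (c (φ a)) ⟨φ a, hi, rfl⟩
      rw [encard_le_one_iff] at this
      exact this a a' ⟨ha, hXE ha, rfl⟩ ⟨ha', hXE ha', haa.symm⟩
  · -- reduction
    intro X hX
    rw [hNindep] at hX
    obtain ⟨hXE, hXi⟩ := hX
    apply hpaving X hXE
    have hXfin : X.Finite := hfin.subset hXE
    have h1 : (φ '' X).ncard = X.ncard := ncard_image_of_injOn hXi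
    have hss : φ '' X ⊆ Set.Iio d := by
      rintro _ ⟨x, hx, rfl⟩
      exact hφ_lt x (hXE hx)
    have h2 : (Set.Iio d).ncard = d := by
      rw [← Finset.coe_range, ncard_coe_finset, Finset.card_range]
    have h3 : X.ncard ≤ d := by
      rw [← h1, ← h2]
      exact ncard_le_ncard hss (Finset.coe_range d ▸ (Finset.range d).finite_toSet)
    rw [← hXfin.cast_ncard_eq]
    exact_mod_cast h3
  · -- class sizes
    rintro s ⟨i, _, rfl⟩
    have hci : c i ⊆ M.E := fun x hx => hx.1
    have hgi : g '' (c i) ⊆ Set.Ico (i * b) (i * b + b) := by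
      rintro _ ⟨x, ⟨hxE, hxi⟩, rfl⟩
      have h1 := Nat.div_add_mod (g x) b
      have h3 : g x / b = i := hxi
      rw [h3, Nat.mul_comm b i] at h1
      have h2 : g x % b < b := Nat.mod_lt _ (by omega)
      constructor <;> omega
    have h4 : (c i).encard = (g '' (c i)).encard :=
      (InjOn.encard_image (hg_inj.mono hci)).symm
    have h5 : (Set.Ico (i * b) (i * b + b)).encard = (b : ℕ∞) := by
      rw [← Finset.coe_Ico, encard_coe_eq_coe_finsetCard, Nat.card_Ico]
      simp
    have h6 : (c i).encard ≤ (b : ℕ∞) := by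
      rw [h4, ← h5]
      exact encard_mono hgi
    exact h6
end

section
/- Let M = (S, I) be a k-colorable paving matroid of rank 2 (i.e., a loopless matroid of rank 2). Then there exists a ⌊4k/3⌋-colorable partition matroid N = (S, J) that is a rank preserving reduction of M, i.e., N ⪯_r M and χ(N) ≤ ⌊4k/3⌋. -/
open Set

variable {α : Type*}

section Auxiliary

/-- The partition matroid with two classes `A` and `B`. -/
private noncomputable def partition2 (A B : Set α) (hfin : (A ∪ B).Finite)
    (hd : Disjoint A B) : Matroid α :=
  (IndepMatroid.ofFinite hfin
    (fun X => X ⊆ A ∪ B ∧ (X ∩ A).encard ≤ 1 ∧ (X ∩ B).encard ≤ 1)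
    ⟨empty_subset _, by simp, by simp⟩
    (fun I J hJ hIJ => ⟨hIJ.trans hJ.1,
      le_trans (encard_mono (inter_subset_inter_left _ hIJ)) hJ.2.1,
      le_trans (encard_mono (inter_subset_inter_left _ hIJ)) hJ.2.2⟩)
    (by
      rintro I J ⟨hIs, hIA, hIB⟩ ⟨hJs, hJA, hJB⟩ hlt
      have hIfin : I.Finite := hfin.subset hIs
      have hJfin : J.Finite := hfin.subset hJs
      have hkey : (I ∩ A).encard < (J ∩ A).encard ∨ (I ∩ B).encard < (J ∩ B).encard := by
        by_contra hc
        push_neg at hc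
        have hI' : I.encard = (I ∩ A).encard + (I ∩ B).encard := by
          rw [← encard_union_eq (hd.mono inter_subset_right inter_subset_right),
            ← inter_union_distrib_left, inter_eq_self_of_subset_left hIs]
        have hJ' : J.encard = (J ∩ A).encard + (J ∩ B).encard := by
          rw [← encard_union_eq (hd.mono inter_subset_right inter_subset_right),
            ← inter_union_distrib_left, inter_eq_self_of_subset_left hJs]
        have hle : J.encard ≤ I.encard := by
          rw [hI', hJ']; exact add_le_add hc.1 hc.2
        rw [← hIfin.cast_ncard_eq, ← hJfin.cast_ncard_eq, Nat.cast_le] at hle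
        omega
      rcases hkey with h | h
      · obtain ⟨e, heJ, heA⟩ : (J ∩ A).Nonempty := by
          rw [nonempty_iff_ne_empty]; rintro h0; rw [h0] at h; simp at h
        have hIA0 : I ∩ A = ∅ := by
          rw [← not_nonempty_iff_eq_empty]
          intro hne
          exact absurd (one_le_encard_iff_nonempty.2 hne) (not_le.2 (lt_of_lt_of_le h hJA))
        have heI : e ∉ I := fun h' => by
          have : e ∈ I ∩ A := ⟨h', heA⟩
          rw [hIA0] at this; exact this
        refine ⟨e, heJ, heI, insert_subset (subset_union_left heA) hIs, ?_, ?_⟩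
        · rw [insert_inter_of_mem heA, hIA0]; simp
        · rw [insert_inter_of_notMem (disjoint_left.mp hd heA)]; exact hIB
      · obtain ⟨e, heJ, heB⟩ : (J ∩ B).Nonempty := by
          rw [nonempty_iff_ne_empty]; rintro h0; rw [h0] at h; simp at h
        have hIB0 : I ∩ B = ∅ := by
          rw [← not_nonempty_iff_eq_empty]
          intro hne
          exact absurd (one_le_encard_iff_nonempty.2 hne) (not_le.2 (lt_of_lt_of_le h hJB))
        have heI : e ∉ I := fun h' => by
          have : e ∈ I ∩ B := ⟨h', heB⟩
          rw [hIB0] at this; exact this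
        refine ⟨e, heJ, heI, insert_subset (subset_union_right heB) hIs, ?_, ?_⟩
        · rw [insert_inter_of_notMem (disjoint_right.mp hd heB)]; exact hIA
        · rw [insert_inter_of_mem heB, hIB0]; simp)
    (fun I hI => hI.1)).matroid

private lemma partition2_ground (A B : Set α) (hfin : (A ∪ B).Finite) (hd : Disjoint A B) :
    (partition2 A B hfin hd).E = A ∪ B := rfl

private lemma partition2_indep (A B : Set α) (hfin : (A ∪ B).Finite) (hd : Disjoint A B)
    (X : Set α) : (partition2 A B hfin hd).Indep X ↔
      X ⊆ A ∪ B ∧ (X ∩ A).encard ≤ 1 ∧ (X ∩ B).encard ≤ 1 := by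
  simp [partition2]

private lemma rkE_le {M : Matroid α} {m : ℕ∞} (h : ∀ I, M.Indep I → I.encard ≤ m) :
    M.rkE ≤ m := iSup₂_le h

private lemma le_rkE {M : Matroid α} {I : Set α} (h : M.Indep I) : I.encard ≤ M.rkE :=
  le_iSup₂ (f := fun (I : Set α) (_ : I ∈ {I | M.Indep I}) => I.encard) I h

private lemma encard_le_of_cover_finset {ι : Type*} {m : ℕ∞} (I : ι → Set α) (s : Finset ι) :
    ∀ S : Set α, S ⊆ (⋃ i ∈ s, I i) → (∀ i, (S ∩ I i).encard ≤ m) →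
      S.encard ≤ s.card * m := by
  classical
  induction s using Finset.induction with
  | empty => intro S hS _; simp only [Finset.notMem_empty, iUnion_of_empty, iUnion_empty,
      subset_empty_iff] at hS; simp [hS]
  | insert a s ha ih =>
    intro S hS hm
    have h1 : (S \ I a) ⊆ ⋃ i ∈ s, I i := by
      intro x hx
      have hx' := hS hx.1
      simp only [Finset.mem_insert, mem_iUnion, exists_prop] at hx' ⊢
      obtain ⟨i, (rfl | hi), hxi⟩ := hx'
      · exact absurd hxi hx.2
      · exact ⟨i, hi, hxi⟩
    have h2 := ih (S \ I a) h1 (fun i => le_trans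
      (encard_mono (inter_subset_inter_left _ diff_subset)) (hm i))
    calc S.encard = ((S ∩ I a) ∪ (S \ I a)).encard := by rw [inter_union_diff]
      _ ≤ (S ∩ I a).encard + (S \ I a).encard := encard_union_le _ _
      _ ≤ m + s.card * m := add_le_add (hm a) h2
      _ = (insert a s).card * m := by
          rw [Finset.card_insert_of_notMem ha]
          push_cast
          ring

private lemma cover_bound {k : ℕ} {m : ℕ∞} (S : Set α) (I : Fin k → Set α)
    (h : S ⊆ ⋃ i, I i) (hm : ∀ i, (S ∩ I i).encard ≤ m) : S.encard ≤ k * m := by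
  have := encard_le_of_cover_finset I Finset.univ S (by simpa) hm
  simpa using this

private lemma pair_indep_iff {M : Matroid α}
    (hsing : ∀ x ∈ M.E, M.Indep {x}) {x y : α} (hx : x ∈ M.E) (hy : y ∈ M.E) (hxy : x ≠ y) :
    M.Indep {x, y} ↔ M.closure {x} ≠ M.closure {y} := by
  have h1 : M.Indep {x, y} ↔ y ∉ M.closure {x} := by
    rw [show ({x, y} : Set α) = insert y {x} by rw [pair_comm]]
    exact ((hsing x hx).notMem_closure_iff_of_notMem (by simp [Ne.symm hxy]) hy).symm
  have h2 : M.Indep {x, y} ↔ x ∉ M.closure {y} :=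
    ((hsing y hy).notMem_closure_iff_of_notMem (by simp [hxy]) hx).symm
  constructor
  · intro hI hcl
    exact (h1.mp hI) (hcl ▸ M.mem_closure_self y hy)
  · intro hne
    rw [h1]
    intro hmem
    have hxmem : x ∈ M.closure {y} := by
      by_contra hc
      exact (h1.mp (h2.mpr hc)) hmem
    exact hne (subset_antisymm
      (Matroid.closure_subset_closure_of_subset_closure (singleton_subset_iff.2 hxmem))
      (Matroid.closure_subset_closure_of_subset_closure (singleton_subset_iff.2 hmem)))

/-- The parallel class of `x` in `M`. -/
private def pcl (M : Matroid α) (x : α) : Set α :=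
  {y | y ∈ M.E ∧ M.closure {y} = M.closure {x}}

private lemma pcl_subset (M : Matroid α) (x : α) : pcl M x ⊆ M.E := fun _ hy => hy.1

private lemma mem_pcl_self {M : Matroid α} {x : α} (hx : x ∈ M.E) : x ∈ pcl M x := ⟨hx, rfl⟩

private lemma pcl_eq_of_mem {M : Matroid α} {x y : α} (hy : y ∈ pcl M x) :
    pcl M y = pcl M x := by
  ext z
  exact ⟨fun hz => ⟨hz.1, hz.2.trans hy.2⟩, fun hz => ⟨hz.1, hz.2.trans hy.2.symm⟩⟩

end Auxiliary

/-- A `k`-colorable paving matroid of rank `2` admits a rank preserving reduction to a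
`⌊4k/3⌋`-colorable partition matroid. -/
theorem statement_7 (M : Matroid α) (hfin : M.E.Finite) (k : ℕ)
    (hpav : M.IsPavingOfRank 2) (hcol : M.IsColorable k) :
    ∃ (N : Matroid α) (P : Set (Set α)), N.IsPartitionMatroid P ∧ N.Reduction M ∧
      N.rkE = M.rkE ∧ ∀ c ∈ P, c.encard ≤ ((4 * k / 3 : ℕ) : ℕ∞) := by
  classical
  obtain ⟨hrk, hpave'⟩ := hpav
  have hpave1 : ∀ X ⊆ M.E, X.encard ≤ 1 → M.Indep X := by
    intro X hX h1
    exact hpave' X hX (by simpa using h1)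
  have hsing : ∀ x ∈ M.E, M.Indep {x} := fun x hx =>
    hpave1 {x} (singleton_subset_iff.2 hx) (by simp)
  have hindep2 : ∀ ⦃I⦄, M.Indep I → I.encard ≤ 2 := fun I hI =>
    le_of_le_of_eq (le_rkE hI) hrk
  -- a two-element independent set exists
  have h2 : ∃ a b, a ≠ b ∧ M.Indep {a, b} := by
    by_contra hcon
    push_neg at hcon
    have hle : M.rkE ≤ 1 := by
      refine rkE_le fun I hI => ?_
      by_contra hle'
      rw [not_le, one_lt_encard_iff] at hle'
      obtain ⟨a, b, haI, hbI, hab⟩ := hle'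
      refine hcon a b hab (hI.subset ?_)
      intro z hz
      simp only [mem_insert_iff, mem_singleton_iff] at hz
      rcases hz with rfl | rfl
      exacts [haI, hbI]
    rw [hrk] at hle
    exact absurd hle (by norm_num)
  obtain ⟨a, b, hab, hIab⟩ := h2
  have ha : a ∈ M.E := hIab.subset_ground (by simp)
  have hb : b ∈ M.E := hIab.subset_ground (by simp)
  -- coloring data
  obtain ⟨CI, hCIind, hCIu, hCId⟩ := hcol
  have hnE : M.E.ncard ≤ 2 * k := by
    have h := cover_bound (m := 2) M.E CI (by rw [hCIu])
      (fun i => le_trans (encard_mono inter_subset_right) (hindep2 (hCIind i)))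
    rw [← hfin.cast_ncard_eq, show ((k : ℕ∞) * 2) = ((2 * k : ℕ) : ℕ∞) by push_cast; ring,
      Nat.cast_le] at h
    exact h
  have hclk : ∀ x, (pcl M x).ncard ≤ k := by
    intro x
    have hone : ∀ i, ((pcl M x) ∩ CI i).encard ≤ 1 := by
      intro i
      rw [encard_le_one_iff]
      rintro u v ⟨hu, hui⟩ ⟨hv, hvi⟩
      by_contra huv
      have hindep : M.Indep {u, v} := (hCIind i).subset (by
        intro z hz
        simp only [mem_insert_iff, mem_singleton_iff] at hz
        rcases hz with rfl | rfl
        exacts [hui, hvi])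
      exact (pair_indep_iff hsing hu.1 hv.1 huv).1 hindep (hu.2.trans hv.2.symm)
    have h := cover_bound (m := 1) (pcl M x) CI (by rw [hCIu]; exact pcl_subset M x) hone
    rw [mul_one, ← (hfin.subset (pcl_subset M x)).cast_ncard_eq, Nat.cast_le] at h
    exact h
  set t := 4 * k / 3 with ht
  have hmod : 3 * t + 4 * k % 3 = 4 * k := Nat.div_add_mod (4 * k) 3
  have hmodlt : 4 * k % 3 < 3 := Nat.mod_lt _ (by norm_num)
  have hkt : k ≤ t := by omega
  -- the split of the ground set
  have hsplit : ∃ A, A ⊆ M.E ∧ A.Nonempty ∧ (∀ x ∈ A, pcl M x ⊆ A) ∧ A.ncard ≤ t ∧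
      (M.E \ A).Nonempty ∧ (M.E \ A).ncard ≤ t := by
    have hclab : M.closure {a} ≠ M.closure {b} := (pair_indep_iff hsing ha hb hab).1 hIab
    have hbCla : b ∉ pcl M a := fun h => hclab h.2.symm
    by_cases hcase : M.E.ncard ≤ t
    · refine ⟨pcl M a, pcl_subset M a, ⟨a, mem_pcl_self ha⟩, ?_, (hclk a).trans hkt,
        ⟨b, hb, hbCla⟩, le_trans (ncard_le_ncard diff_subset hfin) hcase⟩
      intro x hx
      rw [pcl_eq_of_mem hx]
    · push_neg at hcase
      set F := {A : Set α | A ⊆ M.E ∧ A.Nonempty ∧ (∀ x ∈ A, pcl M x ⊆ A) ∧ A.ncard ≤ t}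
        with hF
      have hClaF : pcl M a ∈ F := ⟨pcl_subset M a, ⟨a, mem_pcl_self ha⟩,
        fun x hx => (pcl_eq_of_mem hx).le, (hclk a).trans hkt⟩
      have hNSne : ((fun A : Set α => A.ncard) '' F).Nonempty := ⟨_, ⟨pcl M a, hClaF, rfl⟩⟩
      have hNSbdd : BddAbove ((fun A : Set α => A.ncard) '' F) :=
        ⟨t, by rintro n ⟨A, hA, rfl⟩; exact hA.2.2.2⟩
      obtain ⟨A, hAF, hAcard⟩ := Nat.sSup_mem hNSne hNSbdd
      obtain ⟨hAE, hAne, hAsat, hAt⟩ := hAF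
      have hmax : ∀ A' ∈ F, A'.ncard ≤ A.ncard := by
        intro A' hA'
        exact (le_csSup hNSbdd ⟨A', hA', rfl⟩).trans hAcard.ge
      have hBsub : M.E \ A ⊆ M.E := diff_subset
      have hsum : A.ncard + (M.E \ A).ncard = M.E.ncard := by
        rw [← ncard_union_eq disjoint_sdiff_right (hfin.subset hAE) (hfin.subset hBsub),
          union_diff_cancel hAE]
      have hBne : (M.E \ A).Nonempty := by
        rw [← ncard_pos (hfin.subset hBsub)]
        omega
      refine ⟨A, hAE, hAne, hAsat, hAt, hBne, ?_⟩
      by_contra hBt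
      push_neg at hBt
      have hClB : ∀ x ∈ M.E \ A, pcl M x ⊆ M.E \ A := by
        intro x hx y hy
        refine ⟨hy.1, fun hyA => hx.2 ?_⟩
        have h' := hAsat y hyA
        rw [pcl_eq_of_mem hy] at h'
        exact h' (mem_pcl_self hx.1)
      have hbig : ∀ x ∈ M.E \ A, t + 1 ≤ A.ncard + (pcl M x).ncard := by
        intro x hx
        by_contra hsmall
        push_neg at hsmall
        have hdisjAC : Disjoint A (pcl M x) := disjoint_sdiff_right.mono_right (hClB x hx)
        have hAC : (A ∪ pcl M x) ∈ F := by
          refine ⟨union_subset hAE (pcl_subset M x), hAne.mono subset_union_left, ?_, ?_⟩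
          · intro z hz
            rcases hz with hz | hz
            · exact (hAsat z hz).trans subset_union_left
            · rw [pcl_eq_of_mem hz]
              exact subset_union_right
          · rw [ncard_union_eq hdisjAC (hfin.subset hAE) (hfin.subset (pcl_subset M x))]
            omega
        have hlt : A.ncard < (A ∪ pcl M x).ncard := by
          rw [ncard_union_eq hdisjAC (hfin.subset hAE) (hfin.subset (pcl_subset M x))]
          have hpos : 0 < (pcl M x).ncard := by
            rw [ncard_pos (hfin.subset (pcl_subset M x))]
            exact ⟨x, mem_pcl_self hx.1⟩
          omega
        exact absurd (hmax _ hAC) (not_le.2 hlt)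
      obtain ⟨x, hx⟩ := hBne
      have hy : ∃ y ∈ M.E \ A, y ∉ pcl M x := by
        by_contra hc
        push_neg at hc
        have h1 : (M.E \ A).ncard ≤ (pcl M x).ncard :=
          ncard_le_ncard hc (hfin.subset (pcl_subset M x))
        have h2 := hclk x
        omega
      obtain ⟨y, hyB, hyx⟩ := hy
      have hdisjxy : Disjoint (pcl M x) (pcl M y) := by
        rw [disjoint_left]
        rintro z hzx hzy
        exact hyx (by rw [← pcl_eq_of_mem hzx, pcl_eq_of_mem hzy]; exact mem_pcl_self hyB.1)
      have hdisjA : Disjoint A (pcl M x ∪ pcl M y) := disjoint_sdiff_right.mono_right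
        (union_subset (hClB x hx) (hClB y hyB))
      have hsum3 : A.ncard + ((pcl M x).ncard + (pcl M y).ncard) ≤ M.E.ncard := by
        rw [← ncard_union_eq hdisjxy (hfin.subset (pcl_subset M x))
            (hfin.subset (pcl_subset M y)),
          ← ncard_union_eq hdisjA (hfin.subset hAE)
            (hfin.subset (union_subset (pcl_subset M x) (pcl_subset M y)))]
        exact ncard_le_ncard
          (union_subset hAE (union_subset (pcl_subset M x) (pcl_subset M y))) hfin
      have h1 := hbig x hx
      have h2 := hbig y hyB
      omega
  obtain ⟨A, hAE, hAne, hAsat, hAt, hBne, hBt⟩ := hsplit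
  set B := M.E \ A with hBdef
  have hdAB : Disjoint A B := disjoint_sdiff_right
  have hABE : A ∪ B = M.E := union_diff_cancel hAE
  have hfinAB : (A ∪ B).Finite := hfin.subset hABE.le
  have hcross : ∀ x ∈ A, ∀ y ∈ B, M.Indep {x, y} := by
    intro x hx y hy
    have hxE : x ∈ M.E := hAE hx
    have hne : x ≠ y := fun h => hy.2 (h ▸ hx)
    refine (pair_indep_iff hsing hxE hy.1 hne).2 fun hcl => ?_
    exact hy.2 (hAsat x hx ⟨hy.1, hcl.symm⟩)
  refine ⟨partition2 A B hfinAB hdAB, {A, B}, ⟨?_, ?_, ?_⟩, ⟨hABE, ?_⟩, ?_, ?_⟩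
  · rw [sUnion_pair, partition2_ground]
  · rintro c hc c' hc' hne
    simp only [mem_insert_iff, mem_singleton_iff] at hc hc'
    rcases hc with rfl | rfl <;> rcases hc' with rfl | rfl
    · exact absurd rfl hne
    · exact hdAB
    · exact hdAB.symm
    · exact absurd rfl hne
  · intro X
    rw [partition2_indep, partition2_ground]
    simp only [mem_insert_iff, mem_singleton_iff, forall_eq_or_imp, forall_eq]
  · intro X hX
    rw [partition2_indep] at hX
    obtain ⟨hXs, hXA, hXB⟩ := hX
    have hXE : X ⊆ M.E := hXs.trans hABE.le
    rcases (X ∩ A).eq_empty_or_nonempty with hA0 | ⟨u, hu⟩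
    · have hXB' : X ⊆ B := by
        intro z hz
        rcases hXs hz with hzA | hzB
        · have hmem : z ∈ X ∩ A := ⟨hz, hzA⟩
          rw [hA0] at hmem
          exact absurd hmem (notMem_empty z)
        · exact hzB
      refine hpave1 X hXE ?_
      rw [inter_eq_self_of_subset_left hXB'] at hXB
      exact hXB
    rcases (X ∩ B).eq_empty_or_nonempty with hB0 | ⟨v, hv⟩
    · have hXA' : X ⊆ A := by
        intro z hz
        rcases hXs hz with hzA | hzB
        · exact hzA
        · have hmem : z ∈ X ∩ B := ⟨hz, hzB⟩
          rw [hB0] at hmem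
          exact absurd hmem (notMem_empty z)
      refine hpave1 X hXE ?_
      rw [inter_eq_self_of_subset_left hXA'] at hXA
      exact hXA
    · have hXuv : X ⊆ {u, v} := by
        intro z hz
        rcases hXs hz with hzA | hzB
        · exact Or.inl (encard_le_one_iff.1 hXA z u ⟨hz, hzA⟩ hu)
        · exact Or.inr (encard_le_one_iff.1 hXB z v ⟨hz, hzB⟩ hv)
      exact (hcross u hu.2 v hv.2).subset hXuv
  · rw [hrk]
    apply le_antisymm
    · refine rkE_le fun X hX => ?_
      rw [partition2_indep] at hX
      obtain ⟨hXs, hXA, hXB⟩ := hX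
      calc X.encard = ((X ∩ A) ∪ (X ∩ B)).encard := by
            rw [← inter_union_distrib_left, inter_eq_self_of_subset_left hXs]
        _ ≤ (X ∩ A).encard + (X ∩ B).encard := encard_union_le _ _
        _ ≤ 1 + 1 := add_le_add hXA hXB
        _ = 2 := by norm_num
    · obtain ⟨x₀, hx₀⟩ := hAne
      obtain ⟨y₀, hy₀⟩ := hBne
      have hne : x₀ ≠ y₀ := fun h => hy₀.2 (h ▸ hx₀)
      have hind : (partition2 A B hfinAB hdAB).Indep {x₀, y₀} := by
        rw [partition2_indep]
        refine ⟨?_, ?_, ?_⟩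
        · intro z hz
          simp only [mem_insert_iff, mem_singleton_iff] at hz
          rcases hz with rfl | rfl
          exacts [Or.inl hx₀, Or.inr hy₀]
        · refine le_trans (encard_mono ?_) (le_of_eq (encard_singleton x₀))
          rintro z ⟨hz1, hz2⟩
          simp only [mem_insert_iff, mem_singleton_iff] at hz1
          rcases hz1 with rfl | rfl
          · rfl
          · exact absurd hz2 hy₀.2
        · refine le_trans (encard_mono ?_) (le_of_eq (encard_singleton y₀))
          rintro z ⟨hz1, hz2⟩
          simp only [mem_insert_iff, mem_singleton_iff] at hz1
          rcases hz1 with rfl | rfl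
          · exact absurd hz2 (disjoint_left.mp hdAB hx₀)
          · rfl
      calc (2 : ℕ∞) = ({x₀, y₀} : Set α).encard := (encard_pair hne).symm
        _ ≤ _ := le_rkE hind
  · rintro c hc
    simp only [mem_insert_iff, mem_singleton_iff] at hc
    rcases hc with rfl | rfl
    · rw [← (hfin.subset hAE).cast_ncard_eq, Nat.cast_le]
      exact hAt
    · rw [← (hfin.subset diff_subset).cast_ncard_eq, Nat.cast_le]
      exact hBt
end

section
/- Let S be a set of size 2k partitioned as S = S_1 ∪ S_2 ∪ S_3 with ⌈2k/3⌉ = |S_1| ≥ |S_2| ≥ |S_3| = ⌊2k/3⌋, and let M = (S, I) be the matroid in which X ⊆ S is independent if and only if |X| ≤ 2 and |X ∩ S_i| ≤ 1 for i = 1, 2, 3. Then M is a k-colorable matroid of rank 2, and every partition matroid N with N ⪯ M satisfies χ(N) ≥ ⌊4k/3⌋. -/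
open Set

variable {α : Type*}

lemma aux_pair {α : Type*} (k : ℕ) :
    ∀ (A B C : Set α), Disjoint A B → Disjoint A C → Disjoint B C →
    A.Finite → B.Finite → C.Finite →
    A.ncard ≤ k → B.ncard ≤ k → C.ncard ≤ k →
    A.ncard + B.ncard + C.ncard = 2 * k →
    ∃ I : Fin k → Set α,
      (∀ i, I i ⊆ A ∪ B ∪ C ∧ (I i).encard ≤ 2 ∧
        (I i ∩ A).encard ≤ 1 ∧ (I i ∩ B).encard ≤ 1 ∧ (I i ∩ C).encard ≤ 1) ∧
      (⋃ i, I i) = A ∪ B ∪ C ∧ Pairwise fun i j => Disjoint (I i) (I j) := by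
  induction k with
  | zero =>
    intro A B C _ _ _ hA hB hC ha hb hc _
    have hA0 : A = ∅ := (Set.ncard_eq_zero hA).1 (by omega)
    have hB0 : B = ∅ := (Set.ncard_eq_zero hB).1 (by omega)
    have hC0 : C = ∅ := (Set.ncard_eq_zero hC).1 (by omega)
    refine ⟨Fin.elim0, fun i => i.elim0, ?_, fun i => i.elim0⟩
    simp [hA0, hB0, hC0]
  | succ k IH =>
    -- step: C is the "small" class
    have step : ∀ (A B C : Set α), Disjoint A B → Disjoint A C → Disjoint B C →
        A.Finite → B.Finite → C.Finite →
        A.ncard ≤ k + 1 → B.ncard ≤ k + 1 → C.ncard ≤ k →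
        A.Nonempty → B.Nonempty →
        A.ncard + B.ncard + C.ncard = 2 * (k + 1) →
        ∃ I : Fin (k+1) → Set α,
          (∀ i, I i ⊆ A ∪ B ∪ C ∧ (I i).encard ≤ 2 ∧
            (I i ∩ A).encard ≤ 1 ∧ (I i ∩ B).encard ≤ 1 ∧ (I i ∩ C).encard ≤ 1) ∧
          (⋃ i, I i) = A ∪ B ∪ C ∧ Pairwise fun i j => Disjoint (I i) (I j) := by
      intro A B C hAB hAC hBC hA hB hC ha hb hc hAne hBne hsum
      obtain ⟨x, hx⟩ := hAne
      obtain ⟨y, hy⟩ := hBne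
      have hApos : 0 < A.ncard := (Set.ncard_pos hA).2 ⟨x, hx⟩
      have hBpos : 0 < B.ncard := (Set.ncard_pos hB).2 ⟨y, hy⟩
      have hxB : x ∉ B := (Set.disjoint_left.1 hAB) hx
      have hxC : x ∉ C := (Set.disjoint_left.1 hAC) hx
      have hyA : y ∉ A := (Set.disjoint_right.1 hAB) hy
      have hyC : y ∉ C := (Set.disjoint_left.1 hBC) hy
      have hA' : (A \ {x}).ncard = A.ncard - 1 := Set.ncard_diff_singleton_of_mem hx
      have hB' : (B \ {y}).ncard = B.ncard - 1 := Set.ncard_diff_singleton_of_mem hy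
      obtain ⟨I', hcond, hun, hdisj⟩ := IH (A \ {x}) (B \ {y}) C
        (hAB.mono Set.diff_subset Set.diff_subset)
        (hAC.mono_left Set.diff_subset) (hBC.mono_left Set.diff_subset)
        (hA.diff) (hB.diff) hC (by omega) (by omega) hc (by omega)
      have hxout : x ∉ A \ {x} ∪ (B \ {y}) ∪ C := by
        simp [hxB, hxC]
      have hyout : y ∉ A \ {x} ∪ (B \ {y}) ∪ C := by
        simp [hyA, hyC]
      have hsub : ∀ i, I' i ⊆ A \ {x} ∪ (B \ {y}) ∪ C := fun i => (hcond i).1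
      have hxI : ∀ i, x ∉ I' i := fun i h => hxout (hsub i h)
      have hyI : ∀ i, y ∉ I' i := fun i h => hyout (hsub i h)
      refine ⟨Fin.cons {x, y} I', ?_, ?_, ?_⟩
      · intro i
        refine Fin.cases ?_ ?_ i
        · simp only [Fin.cons_zero]
          refine ⟨?_, ?_, ?_, ?_, ?_⟩
          · intro z hz
            rcases hz with rfl | hz
            · exact Or.inl (Or.inl hx)
            · rcases hz with rfl
              exact Or.inl (Or.inr hy)
          · calc ({x, y} : Set α).encard ≤ ({y} : Set α).encard + 1 :=
                  Set.encard_insert_le _ _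
              _ ≤ 2 := by rw [Set.encard_singleton]; rfl
          · refine le_trans (Set.encard_mono ?_) (le_of_eq (Set.encard_singleton x))
            intro z hz
            rcases hz with ⟨hz1, hz2⟩
            rcases hz1 with rfl | hz1
            · rfl
            · rcases hz1 with rfl; exact absurd hz2 hyA
          · refine le_trans (Set.encard_mono ?_) (le_of_eq (Set.encard_singleton y))
            intro z hz
            rcases hz with ⟨hz1, hz2⟩
            rcases hz1 with rfl | hz1
            · exact absurd hz2 hxB
            · rcases hz1 with rfl; rfl
          · refine le_trans (Set.encard_mono ?_) (by simp : (∅ : Set α).encard ≤ 1)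
            intro z hz
            rcases hz with ⟨hz1, hz2⟩
            rcases hz1 with rfl | hz1
            · exact absurd hz2 hxC
            · rcases hz1 with rfl; exact absurd hz2 hyC
        · intro j
          simp only [Fin.cons_succ]
          obtain ⟨h1, h2, h3, h4, h5⟩ := hcond j
          refine ⟨h1.trans (by intro z; simp; tauto), h2, ?_, ?_, h5⟩
          · refine le_trans (Set.encard_mono ?_) h3
            intro z ⟨hz1, hz2⟩
            refine ⟨hz1, hz2, ?_⟩
            rintro rfl; exact hxI j hz1
          · refine le_trans (Set.encard_mono ?_) h4
            intro z ⟨hz1, hz2⟩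
            refine ⟨hz1, hz2, ?_⟩
            rintro rfl; exact hyI j hz1
      · have : (⋃ i, (Fin.cons {x, y} I' : Fin (k+1) → Set α) i)
            = {x, y} ∪ ⋃ i, I' i := by
          ext z
          simp only [mem_iUnion, Fin.exists_fin_succ, Fin.cons_zero, Fin.cons_succ,
            mem_union]
        rw [this, hun]
        ext z
        simp only [mem_union, mem_insert_iff, mem_singleton_iff, mem_diff]
        constructor
        · rintro ((rfl | rfl) | (⟨h, _⟩ | ⟨h, _⟩) | h) <;> tauto
        · rintro ((h | h) | h)
          · by_cases hzx : z = x <;> tauto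
          · by_cases hzy : z = y <;> tauto
          · tauto
      · intro i j hij
        revert hij
        refine Fin.cases ?_ (fun i' => ?_) i
        · refine Fin.cases ?_ (fun j' => ?_) j
          · intro hij; exact absurd rfl hij
          · intro _
            simp only [Fin.cons_zero, Fin.cons_succ]
            rw [Set.disjoint_left]
            rintro z (rfl | rfl)
            · exact hxI j'
            · exact hyI j'
        · refine Fin.cases ?_ (fun j' => ?_) j
          · intro _
            simp only [Fin.cons_zero, Fin.cons_succ]
            rw [Set.disjoint_right]
            rintro z (rfl | rfl)
            · exact hxI i'
            · exact hyI i'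
          · intro hij
            simp only [Fin.cons_succ]
            exact hdisj (fun h => hij (congrArg Fin.succ h))
    -- main case analysis: find the minimum class
    intro A B C hAB hAC hBC hA hB hC ha hb hc hsum
    have hset1 : A ∪ C ∪ B = A ∪ B ∪ C := by
      ext z; simp only [mem_union]; tauto
    have hset2 : B ∪ C ∪ A = A ∪ B ∪ C := by
      ext z; simp only [mem_union]; tauto
    by_cases hCmin : C.ncard ≤ A.ncard ∧ C.ncard ≤ B.ncard
    · have hAne : A.Nonempty := Set.nonempty_of_ncard_ne_zero (by omega)
      have hBne : B.Nonempty := Set.nonempty_of_ncard_ne_zero (by omega)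
      exact step A B C hAB hAC hBC hA hB hC ha hb (by omega) hAne hBne hsum
    by_cases hBmin : B.ncard ≤ A.ncard ∧ B.ncard ≤ C.ncard
    · have hAne : A.Nonempty := Set.nonempty_of_ncard_ne_zero (by omega)
      have hCne : C.Nonempty := Set.nonempty_of_ncard_ne_zero (by omega)
      obtain ⟨I, hcond, hun, hdisj⟩ := step A C B hAC hAB hBC.symm hA hC hB
        ha hc (by omega) hAne hCne (by omega)
      refine ⟨I, fun i => ?_, by rw [hun, hset1], hdisj⟩
      obtain ⟨h1, h2, h3, h4, h5⟩ := hcond i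
      exact ⟨by rw [← hset1]; exact h1, h2, h3, h5, h4⟩
    · -- A is the minimum
      have hBne : B.Nonempty := Set.nonempty_of_ncard_ne_zero (by omega)
      have hCne : C.Nonempty := Set.nonempty_of_ncard_ne_zero (by omega)
      obtain ⟨I, hcond, hun, hdisj⟩ := step B C A hBC hAB.symm hAC.symm hB hC hA
        hb hc (by omega) hBne hCne (by omega)
      refine ⟨I, fun i => ?_, by rw [hun, hset2], hdisj⟩
      obtain ⟨h1, h2, h3, h4, h5⟩ := hcond i
      exact ⟨by rw [← hset2]; exact h1, h2, h5, h3, h4⟩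


lemma interpair_le_one {α : Type*} (x y : α) (T : Set α) (h : x ∈ T → y ∉ T) :
    (({x, y} : Set α) ∩ T).encard ≤ 1 := by
  by_cases hx : x ∈ T
  · refine le_trans (Set.encard_mono ?_) (le_of_eq (Set.encard_singleton x))
    rintro z ⟨(rfl | rfl), hz⟩
    · rfl
    · exact absurd hz (h hx)
  · refine le_trans (Set.encard_mono ?_) (le_of_eq (Set.encard_singleton y))
    rintro z ⟨(rfl | rfl), hz⟩
    · exact absurd hz hx
    · rfl

/-- The laminar matroid on a `2k`-element set `S = S₁ ∪ S₂ ∪ S₃` (classes of sizes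
`⌈2k/3⌉ = |S₁| ≥ |S₂| ≥ |S₃| = ⌊2k/3⌋`), whose independent sets are the sets of size at
most `2` meeting each `Sᵢ` at most once, is a `k`-colorable matroid of rank `2`, and every
partition matroid `N ⪯ M` has a class of size at least `⌊4k/3⌋`. -/
theorem statement_8 (k : ℕ) (hk : 1 ≤ k) (S S₁ S₂ S₃ : Set α)
    (hunion : S₁ ∪ S₂ ∪ S₃ = S)
    (h12 : Disjoint S₁ S₂) (h13 : Disjoint S₁ S₃) (h23 : Disjoint S₂ S₃)
    (hS : S.encard = ((2 * k : ℕ) : ℕ∞))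
    (hS1 : S₁.encard = (((2 * k + 2) / 3 : ℕ) : ℕ∞))
    (hS3 : S₃.encard = ((2 * k / 3 : ℕ) : ℕ∞))
    (h21 : S₂.encard ≤ S₁.encard) (h32 : S₃.encard ≤ S₂.encard)
    (M : Matroid α) (hE : M.E = S)
    (hInd : ∀ X, M.Indep X ↔ X ⊆ S ∧ X.encard ≤ 2 ∧
      (X ∩ S₁).encard ≤ 1 ∧ (X ∩ S₂).encard ≤ 1 ∧ (X ∩ S₃).encard ≤ 1) :
    M.IsColorable k ∧ M.rkE = 2 ∧
      ∀ (N : Matroid α) (P : Set (Set α)), N.IsPartitionMatroid P → N.Reduction M →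
        ∃ c ∈ P, ((4 * k / 3 : ℕ) : ℕ∞) ≤ c.encard := by
  have hSfin : S.Finite := Set.finite_of_encard_eq_coe hS
  have hsub1 : S₁ ⊆ S := by rw [← hunion]; exact fun z h => Or.inl (Or.inl h)
  have hsub2 : S₂ ⊆ S := by rw [← hunion]; exact fun z h => Or.inl (Or.inr h)
  have hsub3 : S₃ ⊆ S := by rw [← hunion]; exact fun z h => Or.inr h
  have hfin1 : S₁.Finite := hSfin.subset hsub1
  have hfin2 : S₂.Finite := hSfin.subset hsub2
  have hfin3 : S₃.Finite := hSfin.subset hsub3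
  have e1 : S₁.encard = (S₁.ncard : ℕ∞) := hfin1.encard_eq_coe
  have e2 : S₂.encard = (S₂.ncard : ℕ∞) := hfin2.encard_eq_coe
  have e3 : S₃.encard = (S₃.ncard : ℕ∞) := hfin3.encard_eq_coe
  have n1 : S₁.ncard = (2 * k + 2) / 3 := by
    rw [e1] at hS1; exact_mod_cast hS1
  have n3 : S₃.ncard = 2 * k / 3 := by
    rw [e3] at hS3; exact_mod_cast hS3
  have hd123 : Disjoint (S₁ ∪ S₂) S₃ := Set.disjoint_union_left.mpr ⟨h13, h23⟩
  have esum : ((2 * k : ℕ) : ℕ∞) = (S₁.ncard : ℕ∞) + S₂.ncard + S₃.ncard := by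
    rw [← hS, ← hunion, Set.encard_union_eq hd123, Set.encard_union_eq h12, e1, e2, e3]
  have nsum : S₁.ncard + S₂.ncard + S₃.ncard = 2 * k := by
    have := esum.symm
    push_cast at this
    exact_mod_cast this
  have n21 : S₂.ncard ≤ S₁.ncard := by
    rw [e1, e2] at h21; exact_mod_cast h21
  have n32 : S₃.ncard ≤ S₂.ncard := by
    rw [e2, e3] at h32; exact_mod_cast h32
  refine ⟨?_, ?_, ?_⟩
  · -- k-colorability
    obtain ⟨I, hcond, hun, hdisj⟩ := aux_pair k S₁ S₂ S₃ h12 h13 h23 hfin1 hfin2 hfin3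
      (by omega) (by omega) (by omega) nsum
    refine ⟨I, fun i => ?_, by rw [hE, ← hunion]; exact hun, hdisj⟩
    obtain ⟨h1, h2, h3, h4, h5⟩ := hcond i
    exact (hInd _).2 ⟨by rw [← hunion]; exact h1, h2, h3, h4, h5⟩
  · -- rank 2
    refine le_antisymm (iSup₂_le fun X hX => ((hInd X).1 hX).2.1) ?_
    have hx1 : S₁.Nonempty := Set.nonempty_of_ncard_ne_zero (by omega)
    obtain ⟨x, hx⟩ := hx1
    have hy : ∃ y, (y ∈ S₂ ∨ y ∈ S₃) := by
      by_cases h2e : S₂.ncard = 0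
      · obtain ⟨y, hy⟩ : S₃.Nonempty := Set.nonempty_of_ncard_ne_zero (by omega)
        exact ⟨y, Or.inr hy⟩
      · obtain ⟨y, hy⟩ : S₂.Nonempty := Set.nonempty_of_ncard_ne_zero h2e
        exact ⟨y, Or.inl hy⟩
    obtain ⟨y, hy⟩ := hy
    have hxy : x ≠ y := by
      rintro rfl
      rcases hy with hy | hy
      · exact (Set.disjoint_left.1 h12) hx hy
      · exact (Set.disjoint_left.1 h13) hx hy
    have hyS : y ∈ S := by rcases hy with hy | hy; exacts [hsub2 hy, hsub3 hy]
    have hind : M.Indep {x, y} := by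
      refine (hInd _).2 ⟨?_, ?_, ?_, ?_, ?_⟩
      · rintro z (rfl | rfl); exacts [hsub1 hx, hyS]
      · calc ({x, y} : Set α).encard ≤ ({y} : Set α).encard + 1 :=
              Set.encard_insert_le _ _
          _ ≤ 2 := by rw [Set.encard_singleton]; rfl
      · exact interpair_le_one x y S₁ fun _ hy1 => by
          rcases hy with hy | hy
          · exact (Set.disjoint_left.1 h12) hy1 hy
          · exact (Set.disjoint_left.1 h13) hy1 hy
      · exact interpair_le_one x y S₂ fun hx2 _ => (Set.disjoint_left.1 h12) hx hx2
      · exact interpair_le_one x y S₃ fun hx3 _ => (Set.disjoint_left.1 h13) hx hx3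
    calc (2 : ℕ∞) = ({x, y} : Set α).encard := (Set.encard_pair hxy).symm
      _ ≤ ⨆ I ∈ {I | M.Indep I}, I.encard :=
          le_iSup₂ (f := fun (X : Set α) (_ : X ∈ {I | M.Indep I}) => X.encard) _ hind
  · -- partition matroid reductions
    rintro N P ⟨hPU, hPdisj, hPind⟩ ⟨hNE, hNM⟩
    have hNES : N.E = S := by rw [hNE, hE]
    have mem_class : ∀ a ∈ S, ∃ c ∈ P, a ∈ c := by
      intro a ha
      have : a ∈ ⋃₀ P := by rw [hPU, hNES]; exact ha
      exact this
    have uniq : ∀ a, ∀ c ∈ P, ∀ c' ∈ P, a ∈ c → a ∈ c' → c = c' := by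
      intro a c hc c' hc' hac hac'
      by_contra hne
      exact (Set.disjoint_left.1 (hPdisj c hc c' hc' hne)) hac hac'
    have claimA : ∀ T, (T = S₁ ∨ T = S₂ ∨ T = S₃) → ∀ x ∈ T, ∀ y ∈ T,
        ∀ c ∈ P, ∀ c' ∈ P, x ∈ c → y ∈ c' → c = c' := by
      intro T hT x hxT y hyT c hc c' hc' hxc hyc
      by_contra hne
      have hxy : x ≠ y := by
        rintro rfl
        exact (Set.disjoint_left.1 (hPdisj c hc c' hc' hne)) hxc hyc
      have hTS : T ⊆ S := by rcases hT with rfl | rfl | rfl; exacts [hsub1, hsub2, hsub3]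
      have hNind : N.Indep {x, y} := by
        refine (hPind _).2 ⟨?_, ?_⟩
        · rintro z (rfl | rfl) <;> rw [hNES]
          exacts [hTS hxT, hTS hyT]
        · intro d hd
          refine interpair_le_one x y d fun hxd hyd => ?_
          have h1 : d = c := uniq x d hd c hc hxd hxc
          have h2 : d = c' := uniq y d hd c' hc' hyd hyc
          exact hne (h1 ▸ h2 ▸ rfl)
      have hMind := hNM _ hNind
      have h2le : (({x, y} : Set α) ∩ T).encard ≤ 1 := by
        obtain ⟨_, _, i1, i2, i3⟩ := (hInd _).1 hMind
        rcases hT with rfl | rfl | rfl; exacts [i1, i2, i3]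
      have heq : (({x, y} : Set α) ∩ T) = {x, y} := by
        apply Set.inter_eq_left.2
        rintro z (rfl | rfl); exacts [hxT, hyT]
      rw [heq, Set.encard_pair hxy] at h2le
      exact absurd h2le (by norm_num)
    have claimB : ∀ x ∈ S, ∀ y ∈ S, ∀ z ∈ S, ∀ cx ∈ P, ∀ cy ∈ P, ∀ cz ∈ P,
        x ∈ cx → y ∈ cy → z ∈ cz → cx ≠ cy → cx ≠ cz → cy ≠ cz → False := by
      intro x hxS y hyS z hzS cx hcx cy hcy cz hcz hxc hyc hzc hxy' hxz' hyz'
      have hxy : x ≠ y := by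
        rintro rfl; exact (Set.disjoint_left.1 (hPdisj cx hcx cy hcy hxy')) hxc hyc
      have hxz : x ≠ z := by
        rintro rfl; exact (Set.disjoint_left.1 (hPdisj cx hcx cz hcz hxz')) hxc hzc
      have hyz : y ≠ z := by
        rintro rfl; exact (Set.disjoint_left.1 (hPdisj cy hcy cz hcz hyz')) hyc hzc
      have hNind : N.Indep {x, y, z} := by
        refine (hPind _).2 ⟨?_, ?_⟩
        · rintro w (rfl | rfl | rfl) <;> rw [hNES]
          exacts [hxS, hyS, hzS]
        · intro d hd
          rw [Set.encard_le_one_iff]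
          rintro a b ⟨ha1, ha2⟩ ⟨hb1, hb2⟩
          have key : ∀ w, w ∈ ({x, y, z} : Set α) → w ∈ d →
              (w = x ∧ d = cx) ∨ (w = y ∧ d = cy) ∨ (w = z ∧ d = cz) := by
            rintro w (rfl | rfl | rfl) hwd
            · exact Or.inl ⟨rfl, uniq w d hd cx hcx hwd hxc⟩
            · exact Or.inr (Or.inl ⟨rfl, uniq w d hd cy hcy hwd hyc⟩)
            · exact Or.inr (Or.inr ⟨rfl, uniq w d hd cz hcz hwd hzc⟩)
          rcases key a ha1 ha2 with ⟨rfl, hda⟩ | ⟨rfl, hda⟩ | ⟨rfl, hda⟩ <;>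
            rcases key b hb1 hb2 with ⟨rfl, hdb⟩ | ⟨rfl, hdb⟩ | ⟨rfl, hdb⟩ <;>
            first
              | rfl
              | (exfalso; first
                  | exact hxy' (hda ▸ hdb ▸ rfl)
                  | exact hxz' (hda ▸ hdb ▸ rfl)
                  | exact hyz' (hda ▸ hdb ▸ rfl)
                  | exact hxy' (hdb ▸ hda ▸ rfl)
                  | exact hxz' (hdb ▸ hda ▸ rfl)
                  | exact hyz' (hdb ▸ hda ▸ rfl))
      have hMind := hNM _ hNind
      have hcard : ({x, y, z} : Set α).encard = 3 := by
        rw [Set.encard_insert_of_notMem (by simp [hxy, hxz]),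
          Set.encard_pair hyz]
        rfl
      have h3le := ((hInd _).1 hMind).2.1
      rw [hcard] at h3le
      exact absurd h3le (by norm_num)
    have hn2pos : 0 < S₂.ncard := by omega
    obtain ⟨a₂, ha₂⟩ : S₂.Nonempty := Set.nonempty_of_ncard_ne_zero (by omega)
    obtain ⟨c₂, hc₂, hac₂⟩ := mem_class a₂ (hsub2 ha₂)
    have hS₂c₂ : S₂ ⊆ c₂ := by
      intro y hyS₂
      obtain ⟨c', hc', hyc'⟩ := mem_class y (hsub2 hyS₂)
      rw [claimA S₂ (Or.inr (Or.inl rfl)) y hyS₂ a₂ ha₂ c' hc' c₂ hc₂ hyc' hac₂] at hyc'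
      exact hyc'
    by_cases h3e : S₃.ncard = 0
    · refine ⟨c₂, hc₂, ?_⟩
      calc ((4 * k / 3 : ℕ) : ℕ∞) ≤ (S₂.ncard : ℕ∞) := Nat.cast_le.2 (by omega)
        _ = S₂.encard := e2.symm
        _ ≤ c₂.encard := Set.encard_mono hS₂c₂
    · obtain ⟨a₃, ha₃⟩ : S₃.Nonempty := Set.nonempty_of_ncard_ne_zero h3e
      obtain ⟨c₃, hc₃, hac₃⟩ := mem_class a₃ (hsub3 ha₃)
      have hS₃c₃ : S₃ ⊆ c₃ := by
        intro y hyS₃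
        obtain ⟨c', hc', hyc'⟩ := mem_class y (hsub3 hyS₃)
        rw [claimA S₃ (Or.inr (Or.inr rfl)) y hyS₃ a₃ ha₃ c' hc' c₃ hc₃ hyc' hac₃] at hyc'
        exact hyc'
      obtain ⟨a₁, ha₁⟩ : S₁.Nonempty := Set.nonempty_of_ncard_ne_zero (by omega)
      obtain ⟨c₁, hc₁, hac₁⟩ := mem_class a₁ (hsub1 ha₁)
      have hS₁c₁ : S₁ ⊆ c₁ := by
        intro y hyS₁
        obtain ⟨c', hc', hyc'⟩ := mem_class y (hsub1 hyS₁)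
        rw [claimA S₁ (Or.inl rfl) y hyS₁ a₁ ha₁ c' hc' c₁ hc₁ hyc' hac₁] at hyc'
        exact hyc'
      by_cases h23c : c₂ = c₃
      · refine ⟨c₂, hc₂, ?_⟩
        calc ((4 * k / 3 : ℕ) : ℕ∞) ≤ ((S₂.ncard + S₃.ncard : ℕ) : ℕ∞) :=
              Nat.cast_le.2 (by omega)
          _ = S₂.encard + S₃.encard := by rw [e2, e3]; push_cast; ring
          _ = (S₂ ∪ S₃).encard := (Set.encard_union_eq h23).symm
          _ ≤ c₂.encard := Set.encard_mono (Set.union_subset hS₂c₂ (h23c ▸ hS₃c₃))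
      · have h1eq : c₁ = c₂ ∨ c₁ = c₃ := by
          by_contra hno
          push_neg at hno
          exact claimB a₁ (hsub1 ha₁) a₂ (hsub2 ha₂) a₃ (hsub3 ha₃) c₁ hc₁ c₂ hc₂ c₃ hc₃
            hac₁ hac₂ hac₃ hno.1 hno.2 h23c
        rcases h1eq with rfl | rfl
        · refine ⟨c₁, hc₁, ?_⟩
          calc ((4 * k / 3 : ℕ) : ℕ∞) ≤ ((S₁.ncard + S₂.ncard : ℕ) : ℕ∞) :=
                Nat.cast_le.2 (by omega)
            _ = S₁.encard + S₂.encard := by rw [e1, e2]; push_cast; ring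
            _ = (S₁ ∪ S₂).encard := (Set.encard_union_eq h12).symm
            _ ≤ c₁.encard := Set.encard_mono (Set.union_subset hS₁c₁ hS₂c₂)
        · refine ⟨c₁, hc₁, ?_⟩
          calc ((4 * k / 3 : ℕ) : ℕ∞) ≤ ((S₁.ncard + S₃.ncard : ℕ) : ℕ∞) :=
                Nat.cast_le.2 (by omega)
            _ = S₁.encard + S₃.encard := by rw [e1, e3]; push_cast; ring
            _ = (S₁ ∪ S₃).encard := (Set.encard_union_eq h13).symm
            _ ≤ c₁.encard := Set.encard_mono (Set.union_subset hS₁c₁ hS₃c₃)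
end

section
/- Let M = (S, I) be a k-colorable paving matroid of rank 3. Then there exists a (2k−1)-colorable partition matroid N = (S, J) that is a rank preserving reduction of M, i.e., N ⪯_r M and χ(N) ≤ 2k−1. -/
open Set

variable {α : Type*}

open scoped Classical



section AuxPack

lemma pack_abstract {β : Type*} (c : ℕ) (s : Finset β) (f : β → ℕ) :
    ∀ m : ℕ, (∀ b ∈ s, f b ≤ c) → 1 ≤ m → m ≤ ∑ b ∈ s, f b →
      ∃ t ⊆ s, m ≤ ∑ b ∈ t, f b ∧ ∑ b ∈ t, f b ≤ m + c - 1 := by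
  induction s using Finset.induction_on with
  | empty => intro m _ hm hms; simp at hms; omega
  | @insert a s' ha ih =>
    intro m hc hm hms
    rw [Finset.sum_insert ha] at hms
    by_cases hfa : m ≤ f a
    · refine ⟨{a}, by simp, by simpa using hfa, ?_⟩
      have := hc a (Finset.mem_insert_self a s')
      simp only [Finset.sum_singleton]
      omega
    · obtain ⟨t, hts, h1, h2⟩ := ih (m - f a)
        (fun b hb => hc b (Finset.mem_insert_of_mem hb)) (by omega) (by omega)
      refine ⟨insert a t, Finset.insert_subset_insert a hts, ?_, ?_⟩ <;>
        rw [Finset.sum_insert (fun h => ha (hts h))] <;> omega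

lemma pack_main {β : Type*} (𝒞 : Finset β) (f : β → ℕ) (c : ℕ)
    (h1 : ∀ b ∈ 𝒞, 1 ≤ f b) (hc : ∀ b ∈ 𝒞, f b ≤ c)
    (hT : 2 * ∑ b ∈ 𝒞, f b ≤ 3 * c + 1) (hcard : 2 ≤ 𝒞.card) :
    ∃ Q ⊆ 𝒞, 1 ≤ ∑ b ∈ Q, f b ∧ ∑ b ∈ Q, f b ≤ c ∧
      1 ≤ ∑ b ∈ 𝒞 \ Q, f b ∧ ∑ b ∈ 𝒞 \ Q, f b ≤ c := by
  have hsd : ∀ Q ⊆ 𝒞, (∑ b ∈ 𝒞 \ Q, f b) + ∑ b ∈ Q, f b = ∑ b ∈ 𝒞, f b :=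
    fun Q hQ => Finset.sum_sdiff hQ
  by_cases hTc : ∑ b ∈ 𝒞, f b ≤ c
  · obtain ⟨a, hamem, b, hbmem, hab⟩ := Finset.one_lt_card.mp hcard
    have he : 𝒞 \ 𝒞.erase a = {a} := by
      ext x
      simp only [Finset.mem_sdiff, Finset.mem_erase, Finset.mem_singleton]
      constructor
      · rintro ⟨hx, h⟩; by_contra hxa; exact h ⟨hxa, hx⟩
      · rintro rfl; exact ⟨hamem, fun h => h.1 rfl⟩
    refine ⟨𝒞.erase a, Finset.erase_subset a 𝒞, ?_, ?_, ?_, ?_⟩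
    · exact le_trans (h1 b hbmem) (Finset.single_le_sum (fun i _ => Nat.zero_le _)
        (Finset.mem_erase.mpr ⟨Ne.symm hab, hbmem⟩))
    · exact le_trans (Finset.sum_le_sum_of_subset (Finset.erase_subset a 𝒞)) hTc
    · rw [he, Finset.sum_singleton]; exact h1 a hamem
    · rw [he, Finset.sum_singleton]; exact hc a hamem
  · push_neg at hTc
    by_cases hbig : ∃ b ∈ 𝒞, (∑ b ∈ 𝒞, f b) - c ≤ f b
    · obtain ⟨b, hbmem, hb⟩ := hbig
      have hQ : ({b} : Finset β) ⊆ 𝒞 := Finset.singleton_subset_iff.mpr hbmem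
      have h2 := hsd {b} hQ
      rw [Finset.sum_singleton] at h2
      refine ⟨{b}, hQ, ?_, ?_, ?_, ?_⟩
      · rw [Finset.sum_singleton]; exact h1 b hbmem
      · rw [Finset.sum_singleton]; exact hc b hbmem
      · have := hc b hbmem; omega
      · have := h1 b hbmem; omega
    · push_neg at hbig
      obtain ⟨t, hts, hl, hu⟩ := pack_abstract ((∑ b ∈ 𝒞, f b) - c - 1) 𝒞 f
        ((∑ b ∈ 𝒞, f b) - c)
        (fun b hb => by have := hbig b hb; omega) (by omega) (by omega)
      have h2 := hsd t hts
      have htle : ∑ b ∈ t, f b ≤ ∑ b ∈ 𝒞, f b := Finset.sum_le_sum_of_subset hts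
      exact ⟨t, hts, by omega, by omega, by omega, by omega⟩

lemma ncard_sUnion_finset (𝒞 : Finset (Set α)) (hfin : ∀ c ∈ 𝒞, (c : Set α).Finite)
    (hdisj : ∀ c ∈ 𝒞, ∀ c' ∈ 𝒞, c ≠ c' → Disjoint c c') :
    (⋃₀ (𝒞 : Set (Set α))).ncard = ∑ c ∈ 𝒞, c.ncard := by
  induction 𝒞 using Finset.induction_on with
  | empty => simp
  | @insert a s' ha ih =>
    have hfin' : ∀ c ∈ s', (c : Set α).Finite :=
      fun c hc => hfin c (Finset.mem_insert_of_mem hc)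
    have hdisj' : ∀ c ∈ s', ∀ c' ∈ s', c ≠ c' → Disjoint c c' :=
      fun c hc c' hc' => hdisj c (Finset.mem_insert_of_mem hc) c' (Finset.mem_insert_of_mem hc')
    have hUfin : (⋃₀ (s' : Set (Set α))).Finite :=
      Set.Finite.sUnion s'.finite_toSet hfin'
    have hd : Disjoint a (⋃₀ (s' : Set (Set α))) := by
      rw [Set.disjoint_sUnion_right]
      intro t ht
      exact hdisj a (Finset.mem_insert_self a s') t
        (Finset.mem_insert_of_mem ht) (fun h => ha (h ▸ ht))
    rw [Finset.coe_insert, Set.sUnion_insert, Finset.sum_insert ha,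
      Set.ncard_union_eq hd (hfin a (Finset.mem_insert_self a s')) hUfin, ih hfin' hdisj']

lemma encard_iUnion_le_sum {k : ℕ} (I : Fin k → Set α) :
    (⋃ i, I i).encard ≤ ∑ i : Fin k, (I i).encard := by
  have h : ∀ s : Finset (Fin k), (⋃ i ∈ s, I i).encard ≤ ∑ i ∈ s, (I i).encard := by
    intro s
    induction s using Finset.induction_on with
    | empty => simp
    | @insert a s' ha ih =>
      rw [Finset.set_biUnion_insert, Finset.sum_insert ha]
      exact (Set.encard_union_le _ _).trans (add_le_add le_rfl ih)
  have h2 := h Finset.univ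
  simpa using h2

lemma ncard_le_of_encard_le {s : Set α} {n : ℕ} (hs : s.Finite) (h : s.encard ≤ (n : ℕ∞)) :
    s.ncard ≤ n := by
  rw [← hs.cast_ncard_eq] at h; exact_mod_cast h

lemma rkE_eq_coe {M : Matroid α} {r : ℕ} (hub : ∀ I, M.Indep I → I.encard ≤ (r : ℕ∞))
    (hex : ∃ I, M.Indep I ∧ I.encard = (r : ℕ∞)) : M.rkE = (r : ℕ∞) := by
  obtain ⟨I, hI, hIc⟩ := hex
  rw [Matroid.rkE]
  refine le_antisymm (iSup₂_le fun J hJ => hub J hJ) ?_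
  rw [← hIc]
  exact le_iSup₂ (f := fun J (_ : J ∈ {I | M.Indep I}) => J.encard) I hI

end AuxPack


lemma exists_partition_matroid3 (A B C : Set α) (hfin : (A ∪ (B ∪ C)).Finite)
    (hAB : Disjoint A B) (hAC : Disjoint A C) (hBC : Disjoint B C) :
    ∃ N : Matroid α, N.E = A ∪ (B ∪ C) ∧
      ∀ X, N.Indep X ↔ X ⊆ A ∪ (B ∪ C) ∧
        (X ∩ A).encard ≤ 1 ∧ (X ∩ B).encard ≤ 1 ∧ (X ∩ C).encard ≤ 1 := by
  set U := A ∪ (B ∪ C) with hU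
  set Ind : Set α → Prop := fun X =>
    X ⊆ U ∧ (X ∩ A).encard ≤ 1 ∧ (X ∩ B).encard ≤ 1 ∧ (X ∩ C).encard ≤ 1 with hInd
  have hdecomp : ∀ X, X ⊆ U → X = (X ∩ A) ∪ ((X ∩ B) ∪ (X ∩ C)) := by
    intro X hX
    rw [← Set.inter_union_distrib_left, ← Set.inter_union_distrib_left]
    exact (Set.inter_eq_self_of_subset_left hX).symm
  have hone : ∀ s : Set α, s.encard ≤ 1 → s.ncard ≤ 1 := by
    intro s hs
    have hsfin : s.Finite := Set.finite_of_encard_le_coe (by exact_mod_cast hs)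
    rw [← hsfin.cast_ncard_eq] at hs
    exact_mod_cast hs
  have hcard : ∀ X, Ind X → X.Finite ∧
      X.ncard = (X ∩ A).ncard + (X ∩ B).ncard + (X ∩ C).ncard := by
    intro X hX
    obtain ⟨hXU, h1, h2, h3⟩ := hX
    have hXfin : X.Finite := hfin.subset hXU
    refine ⟨hXfin, ?_⟩
    have hdAB : Disjoint (X ∩ A) (X ∩ B) := hAB.mono inter_subset_right inter_subset_right
    have hdAC : Disjoint (X ∩ A) (X ∩ C) := hAC.mono inter_subset_right inter_subset_right
    have hdBC : Disjoint (X ∩ B) (X ∩ C) := hBC.mono inter_subset_right inter_subset_right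
    have e1 : X.ncard = ((X ∩ A) ∪ ((X ∩ B) ∪ (X ∩ C))).ncard := by
      conv_lhs => rw [hdecomp X hXU]
    rw [e1, Set.ncard_union_eq (Set.disjoint_union_right.mpr ⟨hdAB, hdAC⟩)
        (hXfin.subset inter_subset_left) ((hXfin.subset inter_subset_left).union
          (hXfin.subset inter_subset_left)),
      Set.ncard_union_eq hdBC (hXfin.subset inter_subset_left)
        (hXfin.subset inter_subset_left)]
    ring
  refine ⟨(IndepMatroid.ofFinite hfin Ind ?_ ?_ ?_ ?_).matroid, ?_, ?_⟩
  · exact ⟨empty_subset _, by simp, by simp, by simp⟩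
  · rintro I J ⟨hJU, h1, h2, h3⟩ hIJ
    exact ⟨hIJ.trans hJU,
      le_trans (Set.encard_mono (inter_subset_inter_left _ hIJ)) h1,
      le_trans (Set.encard_mono (inter_subset_inter_left _ hIJ)) h2,
      le_trans (Set.encard_mono (inter_subset_inter_left _ hIJ)) h3⟩
  · intro I J hI hJ hlt
    obtain ⟨hIfin, hIcard⟩ := hcard I hI
    obtain ⟨hJfin, hJcard⟩ := hcard J hJ
    obtain ⟨hIU, hIA, hIB, hIC⟩ := hI
    obtain ⟨hJU, hJA, hJB, hJC⟩ := hJ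
    have bIA := hone _ hIA; have bIB := hone _ hIB; have bIC := hone _ hIC
    have bJA := hone _ hJA; have bJB := hone _ hJB; have bJC := hone _ hJC
    -- find a class where J has a point and I doesn't
    have key : ∃ c ∈ ({A, B, C} : Set (Set α)), (I ∩ c).ncard = 0 ∧ 1 ≤ (J ∩ c).ncard := by
      by_contra hcon
      push_neg at hcon
      have cA := hcon A (by simp)
      have cB := hcon B (by simp)
      have cC := hcon C (by simp)
      omega
    obtain ⟨c, hcmem, hIc, hJc⟩ := key
    have hIc' : I ∩ c = ∅ := by
      rw [Set.ncard_eq_zero (hIfin.subset inter_subset_left)] at hIc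
      exact hIc
    obtain ⟨e, heJ, hec⟩ : ∃ e, e ∈ J ∧ e ∈ c := by
      obtain ⟨e, he⟩ := Set.nonempty_of_ncard_ne_zero (by omega : (J ∩ c).ncard ≠ 0)
      exact ⟨e, he.1, he.2⟩
    have heI : e ∉ I := fun h => by
      have : e ∈ I ∩ c := ⟨h, hec⟩
      rw [hIc'] at this
      exact this
    refine ⟨e, heJ, heI, ?_⟩
    have hins : ∀ D : Set α, e ∉ D → (insert e I) ∩ D = I ∩ D :=
      fun D hD => Set.insert_inter_of_notMem hD
    have hself : (insert e I) ∩ c = {e} := by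
      rw [Set.insert_inter_of_mem hec, hIc']
      simp
    have heU : e ∈ U := hJU heJ
    have hsub : insert e I ⊆ U := Set.insert_subset heU hIU
    simp only [Set.mem_insert_iff, Set.mem_singleton_iff] at hcmem
    rcases hcmem with rfl | rfl | rfl
    · exact ⟨hsub, by rw [hself]; simp, by rw [hins B (disjoint_left.mp hAB hec)]; exact hIB,
        by rw [hins C (disjoint_left.mp hAC hec)]; exact hIC⟩
    · exact ⟨hsub, by rw [hins A (disjoint_right.mp hAB hec)]; exact hIA,
        by rw [hself]; simp, by rw [hins C (disjoint_left.mp hBC hec)]; exact hIC⟩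
    · exact ⟨hsub, by rw [hins A (disjoint_right.mp hAC hec)]; exact hIA,
        by rw [hins B (disjoint_right.mp hBC hec)]; exact hIB, by rw [hself]; simp⟩
  · exact fun I hI => hI.1
  · simp [IndepMatroid.ofFinite]
  · intro X
    simp [IndepMatroid.ofFinite, hInd]

/-- A `k`-colorable paving matroid of rank `3` admits a rank preserving reduction to a
`(2k-1)`-colorable partition matroid. -/
theorem statement_9 (M : Matroid α) (hfin : M.E.Finite) (k : ℕ)
    (hpav : M.IsPavingOfRank 3) (hcol : M.IsColorable k) :
    ∃ (N : Matroid α) (P : Set (Set α)), N.IsPartitionMatroid P ∧ N.Reduction M ∧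
      N.rkE = M.rkE ∧ ∀ c ∈ P, c.encard ≤ ((2 * k - 1 : ℕ) : ℕ∞) := by
  classical
  obtain ⟨hrk, hpav2⟩ := hpav
  obtain ⟨IC, hIC, hICcover, hICdisj⟩ := hcol
  -- small sets are independent
  have hpair : ∀ X ⊆ M.E, X.encard ≤ 2 → M.Indep X := by
    intro X hX h2
    refine hpav2 X hX ?_
    have h32 : ((3 - 1 : ℕ) : ℕ∞) = 2 := by norm_num
    rw [h32]; exact h2
  have hpair2 : ∀ x ∈ M.E, ∀ y ∈ M.E, M.Indep {x, y} := by
    intro x hx y hy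
    refine hpair _ (Set.insert_subset hx (by simpa using hy)) ?_
    exact (Set.encard_insert_le _ _).trans (by rw [Set.encard_singleton, one_add_one_eq_two])
  -- independent sets have size at most 3
  have hub : ∀ I, M.Indep I → I.encard ≤ 3 := by
    intro I hI
    have h : I.encard ≤ M.rkE := by
      rw [Matroid.rkE]
      exact le_iSup₂ (f := fun J (_ : J ∈ {J | M.Indep J}) => J.encard) I hI
    rw [hrk] at h
    exact_mod_cast h
  -- there is an independent set of size 3
  have hex3 : ∃ T, M.Indep T ∧ T.encard = 3 := by
    by_contra hcon
    push_neg at hcon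
    have hub2 : ∀ I ∈ {I | M.Indep I}, I.encard ≤ (2 : ℕ∞) := by
      intro I hI
      have h3 := hub I hI
      have hne := hcon I hI
      have hfinI : I.Finite := Set.finite_of_encard_le_coe (by exact_mod_cast h3)
      rw [← hfinI.cast_ncard_eq] at h3 hne ⊢
      have h3' : I.ncard ≤ 3 := by exact_mod_cast h3
      have hne' : I.ncard ≠ 3 := by exact_mod_cast hne
      exact_mod_cast (by omega : I.ncard ≤ 2)
    have hle : M.rkE ≤ 2 := by rw [Matroid.rkE]; exact iSup₂_le hub2
    rw [hrk] at hle
    norm_num at hle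
  obtain ⟨T, hT, hT3⟩ := hex3
  rw [Set.encard_eq_three] at hT3
  obtain ⟨p, u, v, hpu, hpv, huv, rfl⟩ := hT3
  have hTE : ({p, u, v} : Set α) ⊆ M.E := hT.subset_ground
  have hpE : p ∈ M.E := hTE (by simp)
  have huE : u ∈ M.E := hTE (by simp)
  have hvE : v ∈ M.E := hTE (by simp)
  set D := M.E \ {p} with hD
  have huD : u ∈ D := ⟨huE, by simp [Ne.symm hpu]⟩
  have hvD : v ∈ D := ⟨hvE, by simp [Ne.symm hpv]⟩
  -- independent subsets of the closure of a pair have at most 2 elements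
  have cl2 : ∀ x ∈ M.E, ∀ J, M.Indep J → J ⊆ M.closure {p, x} → J.encard ≤ 2 := by
    intro x hx J hJ hsub
    have hpx : M.Indep {p, x} := hpair2 p hpE x hx
    obtain ⟨J', hJ', hJJ'⟩ := hJ.subset_isBasis_of_subset hsub (M.closure_subset_ground _)
    have heq := hJ'.encard_eq_encard hpx.isBasis_closure
    calc J.encard ≤ J'.encard := Set.encard_mono hJJ'
      _ = ({p, x} : Set α).encard := heq
      _ ≤ 2 := (Set.encard_insert_le _ _).trans (by rw [Set.encard_singleton, one_add_one_eq_two])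
  -- lines through p
  set Cl : α → Set α := fun x => M.closure {p, x} ∩ D with hCl
  have tri : ∀ a b : α, ({p, a, b} : Set α) = insert b {p, a} := by
    intro a b; ext y; simp; tauto
  have hdiffpb : ∀ b : α, b ≠ p → ({p, b} : Set α) \ {b} = {p} := by
    intro b hb; ext y
    simp only [Set.mem_diff, Set.mem_insert_iff, Set.mem_singleton_iff]
    constructor
    · rintro ⟨h | h, hy⟩
      · exact h
      · exact absurd h hy
    · rintro rfl; exact ⟨Or.inl rfl, fun h => hb h.symm⟩
  have mem_cl_self : ∀ x ∈ D, x ∈ Cl x := by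
    intro x hx
    exact ⟨M.subset_closure {p, x} (Set.insert_subset hpE (by simpa using hx.1)) (by simp), hx⟩
  have cl_eq : ∀ a ∈ D, ∀ b, b ∈ Cl a → Cl b = Cl a := by
    intro a ha b hbCl
    have hb : b ∈ D := hbCl.2
    have hbcl : b ∈ M.closure {p, a} := hbCl.1
    have hpb : M.Indep {p, b} := hpair2 p hpE b hb.1
    have hbp : b ≠ p := fun h => hb.2 (by simp [h])
    have hbnp : b ∉ M.closure {p} := by
      have h := hpb.notMem_closure_diff_of_mem (show b ∈ ({p, b} : Set α) by simp)
      rwa [hdiffpb b hbp] at h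
    have hpcl : p ∈ M.closure {p, a} :=
      M.subset_closure {p, a} (Set.insert_subset hpE (by simpa using ha.1)) (by simp)
    have h1 : M.closure {p, b} ⊆ M.closure {p, a} :=
      M.closure_subset_closure_of_subset_closure
        (Set.insert_subset hpcl (Set.singleton_subset_iff.mpr hbcl))
    have hacl : a ∈ M.closure {p, b} := by
      have hex := Matroid.closure_exchange (M := M) (X := {p}) (e := b) (f := a)
        ⟨by rw [show (insert a {p} : Set α) = {p, a} from Set.pair_comm a p]; exact hbcl, hbnp⟩
      rw [show (insert b {p} : Set α) = {p, b} from Set.pair_comm b p] at hex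
      exact hex.1
    have hpcl' : p ∈ M.closure {p, b} :=
      M.subset_closure {p, b} (Set.insert_subset hpE (by simpa using hb.1)) (by simp)
    have h2 : M.closure {p, a} ⊆ M.closure {p, b} :=
      M.closure_subset_closure_of_subset_closure
        (Set.insert_subset hpcl' (Set.singleton_subset_iff.mpr hacl))
    show M.closure {p, b} ∩ D = M.closure {p, a} ∩ D
    rw [Set.Subset.antisymm h1 h2]
  have dep_mem : ∀ a ∈ D, ∀ b ∈ D, b ≠ a → ¬M.Indep {p, a, b} → b ∈ Cl a := by
    intro a ha b hb hba hdep
    have hpa : M.Indep {p, a} := hpair2 p hpE a ha.1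
    have hbpa : b ∉ ({p, a} : Set α) := by
      simp only [Set.mem_insert_iff, Set.mem_singleton_iff]
      push_neg
      exact ⟨fun h => hb.2 (by simp [h]), hba⟩
    rw [tri a b, hpa.insert_indep_iff_of_notMem hbpa] at hdep
    simp only [Set.mem_diff, hb.1, true_and, not_not] at hdep
    exact ⟨hdep, hb⟩
  have mem_dep : ∀ a ∈ D, ∀ b ∈ D, b ≠ a → b ∈ Cl a → ¬M.Indep {p, a, b} := by
    intro a ha b hb hba hbCl hind
    have hpa : M.Indep {p, a} := hpair2 p hpE a ha.1
    have hbpa : b ∉ ({p, a} : Set α) := by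
      simp only [Set.mem_insert_iff, Set.mem_singleton_iff]
      push_neg
      exact ⟨fun h => hb.2 (by simp [h]), hba⟩
    rw [tri a b, hpa.insert_indep_iff_of_notMem hbpa] at hind
    exact hind.2 hbCl.1
  have clfin : ∀ x, (Cl x).Finite := fun x =>
    hfin.subset (Set.inter_subset_right.trans Set.diff_subset)
  have clNE : ∀ x ∈ D, (Cl x).Nonempty := fun x hx => ⟨x, mem_cl_self x hx⟩
  -- class sizes are at most 2k - 1
  have clcard : ∀ x ∈ D, (Cl x).ncard ≤ 2 * k - 1 := by
    intro x hx
    set F := M.closure {p, x} ∩ M.E with hF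
    have hFfin : F.Finite := hfin.subset Set.inter_subset_right
    have hpF : p ∈ F :=
      ⟨M.subset_closure {p, x} (Set.insert_subset hpE (by simpa using hx.1)) (by simp), hpE⟩
    have hFeq : F = ⋃ i, (IC i ∩ F) := by
      rw [← Set.iUnion_inter, hICcover]
      exact (Set.inter_eq_self_of_subset_right Set.inter_subset_right).symm
    have hFen : F.encard ≤ (k : ℕ∞) * 2 := by
      calc F.encard = (⋃ i, (IC i ∩ F)).encard := by rw [← hFeq]
        _ ≤ ∑ i : Fin k, (IC i ∩ F).encard := encard_iUnion_le_sum _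
        _ ≤ ∑ _i : Fin k, (2 : ℕ∞) := Finset.sum_le_sum (fun i _ =>
            cl2 x hx.1 _ ((hIC i).subset Set.inter_subset_left)
              (Set.inter_subset_right.trans Set.inter_subset_left))
        _ = (k : ℕ∞) * 2 := by
            simp [Finset.sum_const, Finset.card_univ, nsmul_eq_mul]
    have hFn : F.ncard ≤ 2 * k := by
      apply ncard_le_of_encard_le hFfin
      have hcast : ((2 * k : ℕ) : ℕ∞) = (k : ℕ∞) * 2 := by push_cast; ring
      rw [hcast]; exact hFen
    have hClx : Cl x = F \ {p} := by
      ext y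
      simp only [hCl, hF, hD, Set.mem_inter_iff, Set.mem_diff, Set.mem_singleton_iff]
      tauto
    rw [hClx, Set.ncard_diff_singleton_of_mem hpF]
    omega
  -- ground set has at most 3k elements
  have hEen : M.E.encard ≤ (k : ℕ∞) * 3 := by
    rw [← hICcover]
    calc (⋃ i, IC i).encard ≤ ∑ i : Fin k, (IC i).encard := encard_iUnion_le_sum _
      _ ≤ ∑ _i : Fin k, (3 : ℕ∞) := Finset.sum_le_sum fun i _ => hub _ (hIC i)
      _ = (k : ℕ∞) * 3 := by simp [Finset.sum_const, Finset.card_univ, nsmul_eq_mul]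
  have hEn : M.E.ncard ≤ 3 * k := by
    apply ncard_le_of_encard_le hfin
    have hcast : ((3 * k : ℕ) : ℕ∞) = (k : ℕ∞) * 3 := by push_cast; ring
    rw [hcast]; exact hEen
  have hk1 : 1 ≤ k := by
    by_contra hk
    have hk0 : k = 0 := by omega
    subst hk0
    rw [← hICcover] at hpE
    obtain ⟨i, _⟩ := Set.mem_iUnion.mp hpE
    exact i.elim0
  -- the finite family of classes
  have hDfin : D.Finite := hfin.diff
  have hP0fin : (Cl '' D).Finite := hDfin.image Cl
  set 𝒞 : Finset (Set α) := hP0fin.toFinset with h𝒞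
  have h𝒞mem : ∀ c, c ∈ 𝒞 ↔ ∃ x ∈ D, Cl x = c := by
    intro c; rw [h𝒞, Set.Finite.mem_toFinset]; simp [Set.mem_image]
  have h𝒞disj : ∀ c ∈ 𝒞, ∀ c' ∈ 𝒞, c ≠ c' → Disjoint c c' := by
    intro c hc c' hc' hne
    obtain ⟨x, hx, rfl⟩ := (h𝒞mem c).mp hc
    obtain ⟨y, hy, rfl⟩ := (h𝒞mem c').mp hc'
    rw [Set.disjoint_left]
    intro z hz hz'
    exact hne ((cl_eq x hx z hz).symm.trans (cl_eq y hy z hz'))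
  have h𝒞fin : ∀ c ∈ 𝒞, (c : Set α).Finite := by
    intro c hc; obtain ⟨x, _, rfl⟩ := (h𝒞mem c).mp hc; exact clfin x
  have h𝒞union : ⋃₀ (𝒞 : Set (Set α)) = D := by
    rw [h𝒞, Set.Finite.coe_toFinset]
    apply Set.Subset.antisymm
    · apply Set.sUnion_subset
      rintro c ⟨x, hx, rfl⟩
      exact Set.inter_subset_right
    · intro z hz
      exact ⟨Cl z, ⟨z, hz, rfl⟩, mem_cl_self z hz⟩
  have h𝒞sum : ∑ c ∈ 𝒞, c.ncard = D.ncard := by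
    rw [← ncard_sUnion_finset 𝒞 h𝒞fin h𝒞disj, h𝒞union]
  have hDn : D.ncard = M.E.ncard - 1 := Set.ncard_diff_singleton_of_mem hpE
  have hEn1 : 1 ≤ M.E.ncard := by
    have : 0 < M.E.ncard := (Set.ncard_pos hfin).mpr ⟨p, hpE⟩
    omega
  -- at least two classes
  have hClune : Cl u ≠ Cl v := by
    intro h
    refine mem_dep u huD v hvD (Ne.symm huv) ?_ hT
    rw [h]; exact mem_cl_self v hvD
  have h𝒞card : 2 ≤ 𝒞.card := by
    rw [show (2 : ℕ) = 1 + 1 from rfl]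
    refine Nat.succ_le_of_lt ?_
    refine Finset.one_lt_card.mpr ⟨Cl u, (h𝒞mem _).mpr ⟨u, huD, rfl⟩,
      Cl v, (h𝒞mem _).mpr ⟨v, hvD, rfl⟩, hClune⟩
  -- pack the classes into two groups
  obtain ⟨Q, hQsub, hQ1, hQc, hR1, hRc⟩ := pack_main 𝒞 Set.ncard (2 * k - 1)
    (fun c hc => by
      obtain ⟨x, hx, rfl⟩ := (h𝒞mem c).mp hc
      exact (Set.ncard_pos (clfin x)).mpr (clNE x hx))
    (fun c hc => by
      obtain ⟨x, hx, rfl⟩ := (h𝒞mem c).mp hc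
      exact clcard x hx)
    (by rw [h𝒞sum, hDn]; omega)
    h𝒞card
  set A := ⋃₀ (Q : Set (Set α)) with hA
  set B := ⋃₀ ((𝒞 \ Q : Finset (Set α)) : Set (Set α)) with hB
  have hQfin : ∀ c ∈ Q, (c : Set α).Finite := fun c hc => h𝒞fin c (hQsub hc)
  have hRsub : (𝒞 \ Q : Finset (Set α)) ⊆ 𝒞 := Finset.sdiff_subset
  have hRfin : ∀ c ∈ (𝒞 \ Q : Finset (Set α)), (c : Set α).Finite :=
    fun c hc => h𝒞fin c (hRsub hc)
  have hAn : A.ncard = ∑ c ∈ Q, c.ncard :=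
    ncard_sUnion_finset Q hQfin (fun c hc c' hc' => h𝒞disj c (hQsub hc) c' (hQsub hc'))
  have hBn : B.ncard = ∑ c ∈ 𝒞 \ Q, c.ncard :=
    ncard_sUnion_finset _ hRfin (fun c hc c' hc' => h𝒞disj c (hRsub hc) c' (hRsub hc'))
  have hAfin : A.Finite := Set.Finite.sUnion Q.finite_toSet hQfin
  have hBfin : B.Finite := Set.Finite.sUnion (𝒞 \ Q).finite_toSet hRfin
  have hAne : A.Nonempty := by
    refine (Set.ncard_pos hAfin).mp ?_
    rw [hAn]; omega
  have hBne : B.Nonempty := by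
    refine (Set.ncard_pos hBfin).mp ?_
    rw [hBn]; exact hR1
  have hAcard : A.ncard ≤ 2 * k - 1 := by rw [hAn]; exact hQc
  have hBcard : B.ncard ≤ 2 * k - 1 := by rw [hBn]; exact hRc
  have hABunion : A ∪ B = D := by
    rw [hA, hB, ← Set.sUnion_union, ← Finset.coe_union,
      Finset.union_sdiff_of_subset hQsub, h𝒞union]
  have hABdisj : Disjoint A B := by
    rw [hA, Set.disjoint_sUnion_left]
    intro c hc
    rw [Set.disjoint_sUnion_right]
    intro c' hc'
    have hc2 := Finset.mem_coe.mp hc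
    have hc2' := Finset.mem_sdiff.mp (Finset.mem_coe.mp hc')
    exact h𝒞disj c (hQsub hc2) c' hc2'.1 (fun h => hc2'.2 (h ▸ hc2))
  have hAD : A ⊆ D := by rw [← hABunion]; exact Set.subset_union_left
  have hBD : B ⊆ D := by rw [← hABunion]; exact Set.subset_union_right
  have hpA : p ∉ A := fun h => (hAD h).2 rfl
  have hpB : p ∉ B := fun h => (hBD h).2 rfl
  -- membership in A / B determines class side
  have hmemQ : ∀ a ∈ A, Cl a ∈ Q ∧ a ∈ D := by
    intro a ha
    obtain ⟨c, hcQ, hac⟩ := ha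
    have hc𝒞 : c ∈ 𝒞 := hQsub (Finset.mem_coe.mp hcQ)
    obtain ⟨x, hx, rfl⟩ := (h𝒞mem c).mp hc𝒞
    have haD : a ∈ D := Set.inter_subset_right hac
    rw [cl_eq x hx a hac]
    exact ⟨Finset.mem_coe.mp hcQ, haD⟩
  have hmemR : ∀ b ∈ B, Cl b ∈ 𝒞 \ Q ∧ b ∈ D := by
    intro b hb
    obtain ⟨c, hcR, hbc⟩ := hb
    have hc𝒞 : c ∈ 𝒞 := hRsub (Finset.mem_coe.mp hcR)
    obtain ⟨x, hx, rfl⟩ := (h𝒞mem c).mp hc𝒞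
    have hbD : b ∈ D := Set.inter_subset_right hbc
    rw [cl_eq x hx b hbc]
    exact ⟨Finset.mem_coe.mp hcR, hbD⟩
  -- transversals are independent
  have hkey : ∀ a ∈ A, ∀ b ∈ B, M.Indep {p, a, b} := by
    intro a ha b hb
    obtain ⟨hQa, haD⟩ := hmemQ a ha
    obtain ⟨hQb, hbD⟩ := hmemR b hb
    have hba : b ≠ a := fun h => Set.disjoint_left.mp hABdisj ha (h ▸ hb)
    by_contra hdep
    have hbCl : b ∈ Cl a := dep_mem a haD b hbD hba hdep
    have hcl : Cl b = Cl a := cl_eq a haD b hbCl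
    rw [hcl] at hQb
    exact (Finset.mem_sdiff.mp hQb).2 hQa
  -- the partition matroid
  have hE3 : A ∪ (B ∪ {p}) = M.E := by
    rw [← Set.union_assoc, hABunion]
    exact Set.diff_union_of_subset (by simpa using hpE)
  obtain ⟨N, hNE, hNind⟩ := exists_partition_matroid3 A B {p}
    (by rw [hE3]; exact hfin) hABdisj
    (Set.disjoint_singleton_right.mpr hpA) (Set.disjoint_singleton_right.mpr hpB)
  have hNE' : N.E = M.E := by rw [hNE, hE3]
  have hdecompX : ∀ X : Set α, X ⊆ A ∪ (B ∪ {p}) →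
      X = (X ∩ A) ∪ ((X ∩ B) ∪ (X ∩ {p})) := by
    intro X hX
    rw [← Set.inter_union_distrib_left, ← Set.inter_union_distrib_left]
    exact (Set.inter_eq_self_of_subset_left hX).symm
  refine ⟨N, {A, B, {p}}, ⟨?_, ?_, ?_⟩, ⟨hNE', ?_⟩, ?_, ?_⟩
  · -- sUnion of classes is the ground set
    rw [Set.sUnion_insert, Set.sUnion_insert, Set.sUnion_singleton, hNE]
  · -- pairwise disjointness
    intro c hc c' hc' hne
    simp only [Set.mem_insert_iff, Set.mem_singleton_iff] at hc hc'
    rcases hc with rfl | rfl | rfl <;> rcases hc' with rfl | rfl | rfl <;>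
      first
        | exact absurd rfl hne
        | exact hABdisj
        | exact hABdisj.symm
        | exact Set.disjoint_singleton_right.mpr hpA
        | exact Set.disjoint_singleton_left.mpr hpA
        | exact Set.disjoint_singleton_right.mpr hpB
        | exact Set.disjoint_singleton_left.mpr hpB
  · -- independence characterization
    intro X
    rw [hNind X]
    constructor
    · rintro ⟨hXU, h1, h2, h3⟩
      refine ⟨by rw [hNE]; exact hXU, ?_⟩
      intro c hc
      simp only [Set.mem_insert_iff, Set.mem_singleton_iff] at hc
      rcases hc with rfl | rfl | rfl
      · exact h1
      · exact h2
      · exact h3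
    · rintro ⟨hXE, h⟩
      exact ⟨by rw [hNE] at hXE; exact hXE, h A (by simp), h B (by simp), h {p} (by simp)⟩
  · -- reduction
    intro X hX
    rw [hNind X] at hX
    obtain ⟨hXU, h1, h2, h3⟩ := hX
    have hXE : X ⊆ M.E := by rw [← hE3]; exact hXU
    have hXd := hdecompX X hXU
    by_cases hA0 : X ∩ A = ∅
    · apply hpair X hXE
      calc X.encard = ((X ∩ A) ∪ ((X ∩ B) ∪ (X ∩ {p}))).encard := by rw [← hXd]
        _ = ((X ∩ B) ∪ (X ∩ {p})).encard := by rw [hA0, Set.empty_union]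
        _ ≤ (X ∩ B).encard + (X ∩ {p}).encard := Set.encard_union_le _ _
        _ ≤ 1 + 1 := add_le_add h2 h3
        _ = 2 := by norm_num
    by_cases hB0 : X ∩ B = ∅
    · apply hpair X hXE
      calc X.encard = ((X ∩ A) ∪ ((X ∩ B) ∪ (X ∩ {p}))).encard := by rw [← hXd]
        _ = ((X ∩ A) ∪ (X ∩ {p})).encard := by rw [hB0, Set.empty_union]
        _ ≤ (X ∩ A).encard + (X ∩ {p}).encard := Set.encard_union_le _ _
        _ ≤ 1 + 1 := add_le_add h1 h3
        _ = 2 := by norm_num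
    by_cases hp0 : X ∩ {p} = ∅
    · apply hpair X hXE
      calc X.encard = ((X ∩ A) ∪ ((X ∩ B) ∪ (X ∩ {p}))).encard := by rw [← hXd]
        _ = ((X ∩ A) ∪ ((X ∩ B) ∪ ∅)).encard := by rw [hp0]
        _ = ((X ∩ A) ∪ (X ∩ B)).encard := by rw [Set.union_empty]
        _ ≤ (X ∩ A).encard + (X ∩ B).encard := Set.encard_union_le _ _
        _ ≤ 1 + 1 := add_le_add h1 h2
        _ = 2 := by norm_num
    -- all three parts nonempty: X is a transversal {p, a, b}
    obtain ⟨a, ha⟩ : ∃ a, X ∩ A = {a} :=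
      Set.encard_eq_one.mp (le_antisymm h1
        (Set.one_le_encard_iff_nonempty.mpr (Set.nonempty_iff_ne_empty.mpr hA0)))
    obtain ⟨b, hb⟩ : ∃ b, X ∩ B = {b} :=
      Set.encard_eq_one.mp (le_antisymm h2
        (Set.one_le_encard_iff_nonempty.mpr (Set.nonempty_iff_ne_empty.mpr hB0)))
    obtain ⟨q, hq⟩ : ∃ q, X ∩ {p} = {q} :=
      Set.encard_eq_one.mp (le_antisymm h3
        (Set.one_le_encard_iff_nonempty.mpr (Set.nonempty_iff_ne_empty.mpr hp0)))
    have hqp : q = p := by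
      have hqmem : q ∈ X ∩ {p} := by rw [hq]; exact rfl
      exact hqmem.2
    have haA : a ∈ A := by
      have hamem : a ∈ X ∩ A := by rw [ha]; exact rfl
      exact hamem.2
    have hbB : b ∈ B := by
      have hbmem : b ∈ X ∩ B := by rw [hb]; exact rfl
      exact hbmem.2
    have hXeq : X = {p, a, b} := by
      rw [hXd, ha, hb, hq, hqp]
      ext y; simp; tauto
    rw [hXeq]
    exact hkey a haA b hbB
  · -- rank preservation
    rw [hrk]
    apply rkE_eq_coe
    · intro X hX
      rw [hNind X] at hX
      obtain ⟨hXU, h1, h2, h3⟩ := hX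
      have hXd := hdecompX X hXU
      calc X.encard = ((X ∩ A) ∪ ((X ∩ B) ∪ (X ∩ {p}))).encard := by rw [← hXd]
        _ ≤ (X ∩ A).encard + ((X ∩ B) ∪ (X ∩ {p})).encard := Set.encard_union_le _ _
        _ ≤ (X ∩ A).encard + ((X ∩ B).encard + (X ∩ {p}).encard) :=
            add_le_add le_rfl (Set.encard_union_le _ _)
        _ ≤ 1 + (1 + 1) := add_le_add h1 (add_le_add h2 h3)
        _ = ((3 : ℕ) : ℕ∞) := by norm_num
    · obtain ⟨a0, ha0⟩ := hAne
      obtain ⟨b0, hb0⟩ := hBne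
      have hpa0 : p ≠ a0 := fun h => hpA (h ▸ ha0)
      have hpb0 : p ≠ b0 := fun h => hpB (h ▸ hb0)
      have ha0b0 : a0 ≠ b0 := fun h => Set.disjoint_left.mp hABdisj ha0 (h ▸ hb0)
      refine ⟨{p, a0, b0}, ?_, ?_⟩
      · rw [hNind]
        refine ⟨?_, ?_, ?_, ?_⟩
        · intro y hy
          simp only [Set.mem_insert_iff, Set.mem_singleton_iff] at hy
          rcases hy with rfl | rfl | rfl
          · exact Or.inr (Or.inr rfl)
          · exact Or.inl ha0
          · exact Or.inr (Or.inl hb0)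
        · have hXA : ({p, a0, b0} : Set α) ∩ A = {a0} := by
            ext y
            simp only [Set.mem_inter_iff, Set.mem_insert_iff, Set.mem_singleton_iff]
            constructor
            · rintro ⟨rfl | rfl | rfl, hyA⟩
              · exact absurd hyA hpA
              · rfl
              · exact absurd hyA (Set.disjoint_right.mp hABdisj hb0)
            · rintro rfl; exact ⟨Or.inr (Or.inl rfl), ha0⟩
          rw [hXA, Set.encard_singleton]
        · have hXB : ({p, a0, b0} : Set α) ∩ B = {b0} := by
            ext y
            simp only [Set.mem_inter_iff, Set.mem_insert_iff, Set.mem_singleton_iff]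
            constructor
            · rintro ⟨rfl | rfl | rfl, hyB⟩
              · exact absurd hyB hpB
              · exact absurd hyB (Set.disjoint_left.mp hABdisj ha0)
              · rfl
            · rintro rfl; exact ⟨Or.inr (Or.inr rfl), hb0⟩
          rw [hXB, Set.encard_singleton]
        · have hXp : ({p, a0, b0} : Set α) ∩ {p} = {p} := by
            ext y
            simp only [Set.mem_inter_iff, Set.mem_insert_iff, Set.mem_singleton_iff]
            constructor
            · rintro ⟨_, rfl⟩; rfl
            · rintro rfl; exact ⟨Or.inl rfl, rfl⟩
          rw [hXp, Set.encard_singleton]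
      · rw [show ((3 : ℕ) : ℕ∞) = 3 from by norm_num, Set.encard_eq_three]
        exact ⟨p, a0, b0, hpa0, hpb0, ha0b0, rfl⟩
  · -- class sizes
    intro c hc
    simp only [Set.mem_insert_iff, Set.mem_singleton_iff] at hc
    rcases hc with rfl | rfl | rfl
    · rw [← hAfin.cast_ncard_eq]
      exact_mod_cast hAcard
    · rw [← hBfin.cast_ncard_eq]
      exact_mod_cast hBcard
    · rw [Set.encard_singleton]
      exact_mod_cast (by omega : 1 ≤ 2 * k - 1)
end

section
/- Let r ≥ 2, let H = {H_1, …, H_q} be a (possibly empty) family of proper subsets of a set S with |S| ≥ r, |H_i| ≥ r for all i and |H_i ∩ H_j| ≤ r−2 for i ≠ j, and let M = (S, I) be the paving matroid of rank r whose bases are the r-element subsets of S not contained in any H_i. Then χ(M) = max{⌈|S|/r⌉, ⌈|H_1|/(r−1)⌉, …, ⌈|H_q|/(r−1)⌉}. -/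
open Set Finset

variable {α : Type*}

private lemma init_partition {α : Type*} [DecidableEq α] (r : ℕ) :
    ∀ (k : ℕ) (S : Finset α), S.card ≤ k * r →
    ∃ C : Fin k → Finset α, (∀ i, (C i).card ≤ r) ∧
      (Pairwise fun i j => Disjoint (C i) (C j)) ∧ Finset.univ.biUnion C = S := by
  intro k
  induction k with
  | zero =>
    intro S hS
    have : S = ∅ := Finset.card_eq_zero.1 (by omega)
    exact ⟨Fin.elim0, fun i => i.elim0, fun i => i.elim0, by simp [this]⟩
  | succ k ih =>
    intro S hS
    obtain ⟨T, hTS, hT⟩ := Finset.exists_subset_card_eq (min_le_right r S.card)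
    have hmul : (k+1) * r = k * r + r := by ring
    have hsd : (S \ T).card ≤ k * r := by
      rw [Finset.card_sdiff_of_subset hTS, hT]
      rcases le_total r S.card with h | h
      · rw [min_eq_left h]; omega
      · rw [min_eq_right h]; omega
    obtain ⟨C, hC1, hC2, hC3⟩ := ih (S \ T) hsd
    have hCsub : ∀ i, C i ⊆ S \ T := fun i =>
      hC3 ▸ Finset.subset_biUnion_of_mem C (Finset.mem_univ i)
    refine ⟨Fin.cons T C, ?_, ?_, ?_⟩
    · intro i
      rcases Fin.eq_zero_or_eq_succ i with rfl | ⟨i', rfl⟩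
      · simpa [hT] using min_le_left r S.card
      · simpa using hC1 i'
    · intro i j hij
      rcases Fin.eq_zero_or_eq_succ i with rfl | ⟨i', rfl⟩ <;>
        rcases Fin.eq_zero_or_eq_succ j with rfl | ⟨j', rfl⟩
      · exact absurd rfl hij
      · simpa using Finset.disjoint_sdiff.mono_right (hCsub j')
      · simpa using (Finset.disjoint_sdiff.mono_right (hCsub i')).symm
      · have : i' ≠ j' := fun hc => hij (by rw [hc])
        simpa using hC2 this
    · ext a
      simp only [Finset.mem_biUnion, Finset.mem_univ, true_and]
      constructor
      · rintro ⟨i, hi⟩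
        rcases Fin.eq_zero_or_eq_succ i with rfl | ⟨i', rfl⟩
        · exact hTS (by simpa using hi)
        · exact (Finset.sdiff_subset) (hCsub i' (by simpa using hi))
      · intro ha
        by_cases hT' : a ∈ T
        · exact ⟨0, by simpa using hT'⟩
        · have : a ∈ S \ T := Finset.mem_sdiff.2 ⟨ha, hT'⟩
          rw [← hC3] at this
          obtain ⟨i, -, hi⟩ := Finset.mem_biUnion.1 this
          exact ⟨Fin.succ i, by simpa using hi⟩

private lemma replace_partition {α : Type*} [DecidableEq α] {k : ℕ} {S : Finset α}
    {C : Fin k → Finset α}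
    (hdisj : Pairwise fun i j => Disjoint (C i) (C j))
    (hun : Finset.univ.biUnion C = S)
    {i₀ j : Fin k} (hij : i₀ ≠ j) {A B : Finset α}
    (hAB : A ∪ B = C i₀ ∪ C j) (hABd : Disjoint A B) :
    ∃ C' : Fin k → Finset α, C' i₀ = A ∧ C' j = B ∧ (∀ i, i ≠ i₀ → i ≠ j → C' i = C i) ∧
      (Pairwise fun i j => Disjoint (C' i) (C' j)) ∧ Finset.univ.biUnion C' = S := by
  classical
  have hsub : ∀ i, C i ⊆ S := fun i =>
    hun ▸ Finset.subset_biUnion_of_mem C (Finset.mem_univ i)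
  have hA : A ⊆ C i₀ ∪ C j := hAB ▸ Finset.subset_union_left
  have hB : B ⊆ C i₀ ∪ C j := hAB ▸ Finset.subset_union_right
  have hd : ∀ b, b ≠ i₀ → b ≠ j → Disjoint (C i₀ ∪ C j) (C b) := fun b h1 h2 =>
    Finset.disjoint_union_left.2 ⟨hdisj (Ne.symm h1), hdisj (Ne.symm h2)⟩
  refine ⟨fun i => if i = i₀ then A else if i = j then B else C i,
    by simp, by simp [if_neg (Ne.symm hij)], fun i h1 h2 => by simp [if_neg h1, if_neg h2],
    ?_, ?_⟩
  · intro a b hab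
    dsimp only
    by_cases ha0 : a = i₀
    · subst ha0
      rw [if_pos rfl]
      by_cases hbj : b = j
      · subst hbj
        rw [if_neg (Ne.symm hij), if_pos rfl]
        exact hABd
      · rw [if_neg (Ne.symm hab), if_neg hbj]
        exact (hd b (Ne.symm hab) hbj).mono_left hA
    · rw [if_neg ha0]
      by_cases haj : a = j
      · subst haj
        rw [if_pos rfl]
        by_cases hb0 : b = i₀
        · subst hb0
          rw [if_pos rfl]
          exact hABd.symm
        · rw [if_neg hb0, if_neg (Ne.symm hab)]
          exact (hd b hb0 (Ne.symm hab)).mono_left hB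
      · rw [if_neg haj]
        by_cases hb0 : b = i₀
        · subst hb0
          rw [if_pos rfl]
          exact ((hd a ha0 haj).mono_left hA).symm
        · rw [if_neg hb0]
          by_cases hbj : b = j
          · subst hbj
            rw [if_pos rfl]
            exact ((hd a ha0 haj).mono_left hB).symm
          · rw [if_neg hbj]
            exact hdisj hab
  · ext a
    simp only [Finset.mem_biUnion, Finset.mem_univ, true_and]
    constructor
    · rintro ⟨i, hi⟩
      by_cases h1 : i = i₀
      · rw [if_pos h1] at hi
        rcases Finset.mem_union.1 (hA hi) with h | h
        · exact hsub i₀ h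
        · exact hsub j h
      · rw [if_neg h1] at hi
        by_cases h2 : i = j
        · rw [if_pos h2] at hi
          rcases Finset.mem_union.1 (hB hi) with h | h
          · exact hsub i₀ h
          · exact hsub j h
        · rw [if_neg h2] at hi
          exact hsub i hi
    · intro ha
      rw [← hun] at ha
      obtain ⟨i, -, hi⟩ := Finset.mem_biUnion.1 ha
      by_cases h1 : i = i₀
      · subst h1
        rcases Finset.mem_union.1 (hAB ▸ Finset.mem_union_left (C j) hi) with h | h
        · exact ⟨i, by simp [h]⟩
        · exact ⟨j, by simp [if_neg (Ne.symm hij), h]⟩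
      · by_cases h2 : i = j
        · subst h2
          rcases Finset.mem_union.1 (hAB ▸ Finset.mem_union_right (C i₀) hi) with h | h
          · exact ⟨i₀, by simp [h]⟩
          · exact ⟨i, by simp [if_neg (Ne.symm hij), h]⟩
        · exact ⟨i, by simp [if_neg h1, if_neg h2, hi]⟩

private lemma exchange_tail {α : Type*} [DecidableEq α] {r k : ℕ}
    {Hs : Set (Finset α)} {S : Finset α} {C : Fin k → Finset α}
    (hsize : ∀ i, (C i).card ≤ r)
    (hdisj : Pairwise fun i j => Disjoint (C i) (C j))
    (hun : Finset.univ.biUnion C = S)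
    {i₀ j : Fin k} (hij : i₀ ≠ j) {H : Finset α} (hH : H ∈ Hs) (hCH : C i₀ ⊆ H)
    (hCr : (C i₀).card = r) {A B : Finset α}
    (hAB : A ∪ B = C i₀ ∪ C j) (hABd : Disjoint A B)
    (hAr : A.card ≤ r) (hBr : B.card ≤ r)
    (hAbad : ∀ H' ∈ Hs, A.card = r → ¬ A ⊆ H')
    (hBbad : ∀ H' ∈ Hs, B.card = r → ¬ B ⊆ H') :
    ∃ C' : Fin k → Finset α, (∀ i, (C' i).card ≤ r) ∧
      (Pairwise fun i j => Disjoint (C' i) (C' j)) ∧ Finset.univ.biUnion C' = S ∧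
      {i | ∃ H' ∈ Hs, (C' i).card = r ∧ C' i ⊆ H'} ⊂
        {i | ∃ H' ∈ Hs, (C i).card = r ∧ C i ⊆ H'} := by
  obtain ⟨C', hC'i₀, hC'j, hC'other, hC'disj, hC'un⟩ :=
    replace_partition hdisj hun hij hAB hABd
  have hnb : ∀ i, (i = i₀ ∨ i = j) → ¬ ∃ H' ∈ Hs, (C' i).card = r ∧ C' i ⊆ H' := by
    rintro i (rfl | rfl)
    · rw [hC'i₀]
      rintro ⟨H', h1, h2, h3⟩
      exact hAbad H' h1 h2 h3
    · rw [hC'j]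
      rintro ⟨H', h1, h2, h3⟩
      exact hBbad H' h1 h2 h3
  refine ⟨C', ?_, hC'disj, hC'un, ?_⟩
  · intro i
    by_cases h1 : i = i₀
    · rw [h1, hC'i₀]; exact hAr
    · by_cases h2 : i = j
      · rw [h2, hC'j]; exact hBr
      · rw [hC'other i h1 h2]; exact hsize i
  · rw [Set.ssubset_iff_of_subset]
    · exact ⟨i₀, ⟨H, hH, hCr, hCH⟩, hnb i₀ (Or.inl rfl)⟩
    · intro i hi
      by_cases h1 : i = i₀
      · exact absurd hi (h1 ▸ hnb i (Or.inl h1))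
      · by_cases h2 : i = j
        · exact absurd hi (hnb i (Or.inr h2))
        · rwa [Set.mem_setOf_eq, hC'other i h1 h2] at hi

private lemma exchange {α : Type*} [DecidableEq α] {r k : ℕ} (hr : 2 ≤ r)
    {Hs : Set (Finset α)}
    (hHcard : ∀ H ∈ Hs, H.card ≤ k * (r-1))
    (hint : ∀ H₁ ∈ Hs, ∀ H₂ ∈ Hs, H₁ ≠ H₂ → (H₁ ∩ H₂).card ≤ r - 2)
    {S : Finset α} {C : Fin k → Finset α} (hsize : ∀ i, (C i).card ≤ r)
    (hdisj : Pairwise fun i j => Disjoint (C i) (C j))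
    (hun : Finset.univ.biUnion C = S)
    {i₀ : Fin k} {H : Finset α} (hH : H ∈ Hs) (hCH : C i₀ ⊆ H) (hCr : (C i₀).card = r) :
    ∃ C' : Fin k → Finset α, (∀ i, (C' i).card ≤ r) ∧
      (Pairwise fun i j => Disjoint (C' i) (C' j)) ∧ Finset.univ.biUnion C' = S ∧
      {i | ∃ H' ∈ Hs, (C' i).card = r ∧ C' i ⊆ H'} ⊂
        {i | ∃ H' ∈ Hs, (C i).card = r ∧ C i ⊆ H'} := by
  classical
  -- find a class j meeting H in at most r - 2 elements
  have hsum : ∑ i : Fin k, (C i ∩ H).card ≤ k * (r-1) := by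
    have hd' : ∀ x ∈ (Finset.univ : Finset (Fin k)), ∀ y ∈ (Finset.univ : Finset (Fin k)), x ≠ y →
        Disjoint (C x ∩ H) (C y ∩ H) := fun x _ y _ hxy =>
      (hdisj hxy).mono inter_subset_left inter_subset_left
    calc ∑ i : Fin k, (C i ∩ H).card = (Finset.univ.biUnion fun i => C i ∩ H).card :=
          (Finset.card_biUnion hd').symm
      _ ≤ H.card := Finset.card_le_card (by
          intro a ha
          obtain ⟨i, -, hi⟩ := Finset.mem_biUnion.1 ha
          exact (Finset.mem_inter.1 hi).2)
      _ ≤ k * (r-1) := hHcard H hH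
  have hi₀H : (C i₀ ∩ H).card = r := by rw [Finset.inter_eq_left.2 hCH, hCr]
  obtain ⟨j, hj⟩ : ∃ j, (C j ∩ H).card ≤ r - 2 := by
    by_contra h
    push_neg at h
    have hlt : ∑ _i : Fin k, (r-1) < ∑ i : Fin k, (C i ∩ H).card :=
      Finset.sum_lt_sum (fun i _ => by have := h i; omega)
        ⟨i₀, Finset.mem_univ _, by rw [hi₀H]; omega⟩
    rw [Finset.sum_const, Finset.card_univ, Fintype.card_fin, smul_eq_mul] at hlt
    omega
  have hij : i₀ ≠ j := by
    rintro rfl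
    rw [hi₀H] at hj
    omega
  -- helper facts
  have hpick : ∀ H₂ ∈ Hs, H₂ ≠ H → ∃ x ∈ C i₀, x ∉ H₂ := by
    intro H₂ h2 hne
    by_contra h
    push_neg at h
    have hsub : C i₀ ⊆ H ∩ H₂ := Finset.subset_inter hCH h
    have := Finset.card_le_card hsub
    have := hint H hH H₂ h2 (Ne.symm hne)
    omega
  have huniq : ∀ D : Finset α, D.card = r - 1 → ∀ H₂ ∈ Hs, D ⊆ H₂ →
      ∀ H₃ ∈ Hs, D ⊆ H₃ → H₂ = H₃ := by
    intro D hD H₂ h2 hs2 H₃ h3 hs3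
    by_contra hne
    have := Finset.card_le_card (Finset.subset_inter hs2 hs3)
    have := hint H₂ h2 H₃ h3 hne
    omega
  have hfew : ∀ H₂ ∈ Hs, H₂ ≠ H → ∀ D, D ⊆ C i₀ → D ⊆ H₂ → D.card ≤ r - 2 := by
    intro H₂ h2 hne D hD1 hD2
    have := Finset.card_le_card (Finset.subset_inter (hD1.trans hCH) hD2)
    have := hint H hH H₂ h2 (Ne.symm hne)
    omega
  have hCi₀ne : (C i₀).Nonempty := Finset.card_pos.1 (by omega)
  by_cases hjr : (C j).card = r
  · -- case B : the class j is full; swap an element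
    obtain ⟨y, hyCj, hyH⟩ : ∃ y ∈ C j, y ∉ H := by
      by_contra h
      push_neg at h
      rw [Finset.inter_eq_left.2 h, hjr] at hj
      omega
    set D : Finset α := (C j).erase y with hDdef
    have hD : D.card = r - 1 := by rw [hDdef, Finset.card_erase_of_mem hyCj, hjr]
    have hDCj : D ⊆ C j := Finset.erase_subset _ _
    obtain ⟨x, hxCi₀, hxsafe⟩ : ∃ x ∈ C i₀, ∀ H₃ ∈ Hs, D ⊆ H₃ → x ∉ H₃ := by
      by_cases hDH : ∃ H₂ ∈ Hs, D ⊆ H₂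
      · obtain ⟨H₂, h2, hDH2⟩ := hDH
        have hne : H₂ ≠ H := by
          rintro rfl
          have : D ⊆ C j ∩ H₂ := Finset.subset_inter hDCj hDH2
          have := Finset.card_le_card this
          omega
        obtain ⟨x, hx1, hx2⟩ := hpick H₂ h2 hne
        refine ⟨x, hx1, fun H₃ h3 hs3 => ?_⟩
        rwa [← huniq D hD H₂ h2 hDH2 H₃ h3 hs3]
      · push_neg at hDH
        exact ⟨hCi₀ne.choose, hCi₀ne.choose_spec, fun H₃ h3 hs3 => absurd hs3 (hDH H₃ h3)⟩
    have hyCi₀ : y ∉ C i₀ := Finset.disjoint_right.1 (hdisj hij) hyCj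
    have hxCj : x ∉ C j := Finset.disjoint_left.1 (hdisj hij) hxCi₀
    have hxy : x ≠ y := fun h => hyCi₀ (h ▸ hxCi₀)
    have hxD : x ∉ D := fun h => hxCj (hDCj h)
    set A : Finset α := insert y ((C i₀).erase x) with hAdef
    set B : Finset α := insert x D with hBdef
    have hyA : y ∉ (C i₀).erase x := fun h => hyCi₀ (Finset.mem_of_mem_erase h)
    have hAcard : A.card = r := by
      rw [hAdef, Finset.card_insert_of_notMem hyA, Finset.card_erase_of_mem hxCi₀, hCr]
      omega
    have hBcard : B.card = r := by
      rw [hBdef, Finset.card_insert_of_notMem hxD, hD]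
      omega
    have hAB : A ∪ B = C i₀ ∪ C j := by
      ext a
      simp only [hAdef, hBdef, hDdef, Finset.mem_union, Finset.mem_insert, Finset.mem_erase]
      constructor
      · rintro ((rfl | ⟨-, h⟩) | (rfl | ⟨-, h⟩))
        · exact Or.inr hyCj
        · exact Or.inl h
        · exact Or.inl hxCi₀
        · exact Or.inr h
      · rintro (h | h)
        · by_cases hax : a = x
          · exact Or.inr (Or.inl hax)
          · exact Or.inl (Or.inr ⟨hax, h⟩)
        · by_cases hay : a = y
          · exact Or.inl (Or.inl hay)
          · exact Or.inr (Or.inr ⟨hay, h⟩)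
    have hABd : Disjoint A B := by
      rw [Finset.disjoint_left]
      intro a ha hb
      rw [hAdef, Finset.mem_insert, Finset.mem_erase] at ha
      rw [hBdef, Finset.mem_insert] at hb
      rcases ha with rfl | ⟨hax, ha⟩
      · rcases hb with h | h
        · exact hxy h.symm
        · exact Finset.notMem_erase _ (C j) h
      · rcases hb with rfl | h
        · exact hax rfl
        · exact Finset.disjoint_left.1 (hdisj hij) ha (hDCj h)
    refine exchange_tail hsize hdisj hun hij hH hCH hCr hAB hABd hAcard.le hBcard.le ?_ ?_
    · intro H₃ h3 _ hsub
      by_cases h3H : H₃ = H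
      · exact hyH (h3H ▸ hsub (Finset.mem_insert_self y _))
      · have hsub' : (C i₀).erase x ⊆ H₃ :=
          (Finset.subset_insert y _).trans hsub |>.trans (le_refl _) -- fix
        have := hfew H₃ h3 h3H ((C i₀).erase x) (Finset.erase_subset _ _) hsub'
        have : ((C i₀).erase x).card = r - 1 := by
          rw [Finset.card_erase_of_mem hxCi₀, hCr]
        omega
    · intro H₃ h3 _ hsub
      exact hxsafe H₃ h3 ((Finset.subset_insert x D).trans hsub)
        (hsub (Finset.mem_insert_self x D))
  · -- case A : the class j is not full; move an element
    have hjlt : (C j).card < r := lt_of_le_of_ne (hsize j) hjr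
    obtain ⟨x, hxCi₀, hxsafe⟩ :
        ∃ x ∈ C i₀, ∀ H₃ ∈ Hs, C j ⊆ H₃ → (C j).card = r - 1 → x ∉ H₃ := by
      by_cases hDH : ∃ H₂ ∈ Hs, C j ⊆ H₂ ∧ (C j).card = r - 1
      · obtain ⟨H₂, h2, hs2, hc2⟩ := hDH
        have hne : H₂ ≠ H := by
          rintro rfl
          rw [Finset.inter_eq_left.2 hs2, hc2] at hj
          omega
        obtain ⟨x, hx1, hx2⟩ := hpick H₂ h2 hne
        refine ⟨x, hx1, fun H₃ h3 hs3 hc3 => ?_⟩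
        rwa [← huniq (C j) hc3 H₂ h2 hs2 H₃ h3 hs3]
      · push_neg at hDH
        exact ⟨hCi₀ne.choose, hCi₀ne.choose_spec,
          fun H₃ h3 hs3 hc3 => absurd hc3 (hDH H₃ h3 hs3)⟩
    have hxCj : x ∉ C j := Finset.disjoint_left.1 (hdisj hij) hxCi₀
    set A : Finset α := (C i₀).erase x with hAdef
    set B : Finset α := insert x (C j) with hBdef
    have hAcard : A.card = r - 1 := by rw [hAdef, Finset.card_erase_of_mem hxCi₀, hCr]
    have hBcard : B.card = (C j).card + 1 := by
      rw [hBdef, Finset.card_insert_of_notMem hxCj]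
    have hAB : A ∪ B = C i₀ ∪ C j := by
      ext a
      simp only [hAdef, hBdef, Finset.mem_union, Finset.mem_insert, Finset.mem_erase]
      constructor
      · rintro (⟨-, h⟩ | (rfl | h))
        · exact Or.inl h
        · exact Or.inl hxCi₀
        · exact Or.inr h
      · rintro (h | h)
        · by_cases hax : a = x
          · exact Or.inr (Or.inl hax)
          · exact Or.inl ⟨hax, h⟩
        · exact Or.inr (Or.inr h)
    have hABd : Disjoint A B := by
      rw [Finset.disjoint_left]
      intro a ha hb
      rw [hAdef, Finset.mem_erase] at ha
      rw [hBdef, Finset.mem_insert] at hb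
      rcases hb with rfl | h
      · exact ha.1 rfl
      · exact Finset.disjoint_left.1 (hdisj hij) ha.2 h
    refine exchange_tail hsize hdisj hun hij hH hCH hCr hAB hABd (by omega) (by omega) ?_ ?_
    · intro H₃ h3 hcard
      intro _
      omega
    · intro H₃ h3 hcard hsub
      have hc : (C j).card = r - 1 := by omega
      exact hxsafe H₃ h3 ((Finset.subset_insert x (C j)).trans hsub) hc
        (hsub (Finset.mem_insert_self x (C j)))

private lemma core_partition {α : Type*} [DecidableEq α] {r k : ℕ} (hr : 2 ≤ r)
    (S : Finset α) (Hs : Set (Finset α)) (hS : S.card ≤ k * r)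
    (hHcard : ∀ H ∈ Hs, H.card ≤ k * (r-1))
    (hint : ∀ H₁ ∈ Hs, ∀ H₂ ∈ Hs, H₁ ≠ H₂ → (H₁ ∩ H₂).card ≤ r - 2) :
    ∃ C : Fin k → Finset α, (∀ i, (C i).card ≤ r) ∧
      (Pairwise fun i j => Disjoint (C i) (C j)) ∧ Finset.univ.biUnion C = S ∧
      ∀ i, ∀ H ∈ Hs, (C i).card = r → ¬ C i ⊆ H := by
  classical
  have hne : {n | ∃ C : Fin k → Finset α, ((∀ i, (C i).card ≤ r) ∧
      (Pairwise fun i j => Disjoint (C i) (C j)) ∧ Finset.univ.biUnion C = S) ∧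
      {i | ∃ H' ∈ Hs, (C i).card = r ∧ C i ⊆ H'}.ncard = n}.Nonempty := by
    obtain ⟨C, h1, h2, h3⟩ := init_partition r k S hS
    exact ⟨_, C, ⟨h1, h2, h3⟩, rfl⟩
  obtain ⟨C, ⟨h1, h2, h3⟩, hcount⟩ := Nat.sInf_mem hne
  refine ⟨C, h1, h2, h3, ?_⟩
  by_contra h
  push_neg at h
  obtain ⟨i₀, H, hH, hcr, hsub⟩ := h
  obtain ⟨C', h1', h2', h3', hlt⟩ := exchange hr hHcard hint h1 h2 h3 hH hsub hcr
  have hlt' : {i | ∃ H' ∈ Hs, (C' i).card = r ∧ C' i ⊆ H'}.ncard <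
      {i | ∃ H' ∈ Hs, (C i).card = r ∧ C i ⊆ H'}.ncard :=
    Set.ncard_lt_ncard hlt (Set.toFinite _)
  have hle : sInf {n | ∃ C : Fin k → Finset α, ((∀ i, (C i).card ≤ r) ∧
      (Pairwise fun i j => Disjoint (C i) (C j)) ∧ Finset.univ.biUnion C = S) ∧
      {i | ∃ H' ∈ Hs, (C i).card = r ∧ C i ⊆ H'}.ncard = n} ≤
      {i | ∃ H' ∈ Hs, (C' i).card = r ∧ C' i ⊆ H'}.ncard :=
    Nat.sInf_le ⟨C', ⟨h1', h2', h3'⟩, rfl⟩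
  rw [hcount] at hlt'
  exact absurd (hle.trans_lt hlt') (lt_irrefl _)

private lemma ceil_div_le {a r c : ℕ} (hr : 0 < r) : (a + r - 1) / r ≤ c ↔ a ≤ c * r := by
  rw [Nat.div_le_iff_le_mul_add_pred hr]
  have h1 : a + r - 1 = a + (r - 1) := by omega
  rw [h1, Nat.mul_comm r c, Nat.add_le_add_iff_right]

/-- The coloring number of the paving matroid of rank `r` defined by the family `𝓗` is
`max {⌈|S|/r⌉, ⌈|H|/(r-1)⌉ for H ∈ 𝓗}`. -/
theorem statement_11 (S : Set α) (hfin : S.Finite) (r : ℕ) (hr : 2 ≤ r)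
    (hSr : (r : ℕ∞) ≤ S.encard) (𝓗 : Set (Set α))
    (h𝓗 : ∀ H ∈ 𝓗, H ⊂ S ∧ (r : ℕ∞) ≤ H.encard)
    (h𝓗' : ∀ H₁ ∈ 𝓗, ∀ H₂ ∈ 𝓗, H₁ ≠ H₂ → (H₁ ∩ H₂).encard ≤ ((r - 2 : ℕ) : ℕ∞))
    (M : Matroid α) (hE : M.E = S) (hpav : M.IsPavingOfRank r)
    (hBase : ∀ B, M.IsBase B ↔ B ⊆ S ∧ B.encard = (r : ℕ∞) ∧ ∀ H ∈ 𝓗, ¬B ⊆ H) :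
    M.chi = max ((S.ncard + r - 1) / r)
      (sSup ((fun H : Set α => (H.ncard + r - 2) / (r - 1)) '' 𝓗)) := by
  classical
  set k := max ((S.ncard + r - 1) / r)
      (sSup ((fun H : Set α => (H.ncard + r - 2) / (r - 1)) '' 𝓗)) with hk
  have hrpos : 0 < r := by omega
  have hr1pos : 0 < r - 1 := by omega
  have h𝓗fin : 𝓗.Finite := hfin.finite_subsets.subset (fun H hH => (h𝓗 H hH).1.subset)
  have hHfin : ∀ H ∈ 𝓗, (H : Set α).Finite := fun H hH => hfin.subset (h𝓗 H hH).1.subset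
  have hdiv2 : ∀ a c : ℕ, ((a + r - 2) / (r - 1) ≤ c ↔ a ≤ c * (r - 1)) := by
    intro a c
    have h1 : a + r - 2 = a + (r - 1) - 1 := by omega
    rw [h1, ceil_div_le hr1pos]
  -- the bounds coming from `k`
  have hSk : S.ncard ≤ k * r := (ceil_div_le hrpos).1 (le_max_left _ _)
  have hHk : ∀ H ∈ 𝓗, H.ncard ≤ k * (r - 1) := by
    intro H hH
    refine (hdiv2 _ k).1 (le_trans (le_csSup (h𝓗fin.image _).bddAbove ⟨H, hH, rfl⟩)
      (le_max_right _ _))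
  -- upper bound : M is k-colorable
  have hupper : M.IsColorable k := by
    have harg1 : hfin.toFinset.card ≤ k * r := by
      rw [← Set.ncard_coe_finset, hfin.coe_toFinset]
      exact hSk
    have harg2 : ∀ T ∈ {T : Finset α | (T : Set α) ∈ 𝓗}, T.card ≤ k * (r - 1) := by
      intro T hT
      rw [← Set.ncard_coe_finset]
      exact hHk _ hT
    have harg3 : ∀ T₁ ∈ {T : Finset α | (T : Set α) ∈ 𝓗},
        ∀ T₂ ∈ {T : Finset α | (T : Set α) ∈ 𝓗}, T₁ ≠ T₂ → (T₁ ∩ T₂).card ≤ r - 2 := by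
      intro T₁ h1 T₂ h2 hne
      have hne' : (T₁ : Set α) ≠ (T₂ : Set α) := fun h => hne (Finset.coe_injective h)
      have := h𝓗' _ h1 _ h2 hne'
      rw [← Finset.coe_inter, Set.encard_coe_eq_coe_finsetCard] at this
      exact_mod_cast this
    obtain ⟨C, hC1, hC2, hC3, hC4⟩ := core_partition (r := r) (k := k) hr hfin.toFinset
      {T : Finset α | (T : Set α) ∈ 𝓗} harg1 harg2 harg3
    · have hCS : ∀ i, (C i : Set α) ⊆ S := by
        intro i
        have : C i ⊆ hfin.toFinset :=
          hC3 ▸ Finset.subset_biUnion_of_mem C (Finset.mem_univ i)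
        intro a ha
        simpa using hfin.mem_toFinset.1 (this ha)
      refine ⟨fun i => (C i : Set α), fun i => ?_, ?_, ?_⟩
      · rcases eq_or_lt_of_le (hC1 i) with heq | hlt
        · refine ((hBase (C i)).2 ⟨hCS i, ?_, ?_⟩).indep
          · simp [Set.encard_coe_eq_coe_finsetCard, heq]
          · intro H hH hsub
            refine hC4 i ((hHfin H hH).toFinset) ?_ heq ?_
            · simpa [Set.Finite.coe_toFinset] using hH
            · intro a ha
              exact (hHfin H hH).mem_toFinset.2 (hsub ha)
        · refine hpav.2 _ (hE ▸ hCS i) ?_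
          rw [Set.encard_coe_eq_coe_finsetCard]
          exact_mod_cast Nat.cast_le.2 (by omega : (C i).card ≤ r - 1)
      · rw [hE]
        rw [← hfin.coe_toFinset, ← hC3, Finset.coe_biUnion]
        simp
      · exact fun i j hij => Finset.disjoint_coe.2 (hC2 hij)
  -- lower bound : any colouring uses at least k colours
  have hlower : ∀ j, M.IsColorable j → k ≤ j := by
    intro j ⟨I, hind, hun, hdisjI⟩
    have hIS : ∀ i, I i ⊆ S := by
      intro i
      rw [← hE, ← hun]
      exact Set.subset_iUnion I i
    have hIfin : ∀ i, (I i).Finite := fun i => hfin.subset (hIS i)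
    have hIr : ∀ i, (I i).ncard ≤ r := by
      intro i
      have h1 : (I i).encard ≤ M.rkE :=
        le_iSup₂ (f := fun J (_ : J ∈ {J | M.Indep J}) => J.encard) (I i) (hind i)
      rw [hpav.1, ← (hIfin i).cast_ncard_eq] at h1
      exact_mod_cast h1
    have hIH : ∀ i, ∀ H ∈ 𝓗, (I i ∩ H).ncard ≤ r - 1 := by
      intro i H hH
      by_contra hcon
      push_neg at hcon
      have hJfin : (I i ∩ H).Finite := (hIfin i).subset Set.inter_subset_left
      have hJind : M.Indep (I i ∩ H) := (hind i).subset Set.inter_subset_left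
      have hJr : (I i ∩ H).encard = (r : ℕ∞) := by
        refine le_antisymm ?_ ?_
        · calc (I i ∩ H).encard ≤ (I i).encard := Set.encard_mono Set.inter_subset_left
            _ ≤ (r : ℕ∞) := by
                rw [← (hIfin i).cast_ncard_eq]
                exact_mod_cast hIr i
        · rw [← hJfin.cast_ncard_eq]
          exact_mod_cast (by omega : r ≤ (I i ∩ H).ncard)
      obtain ⟨B, hB, hJB⟩ := Matroid.Indep.exists_isBase_superset hJind
      have hBr : B.encard = (r : ℕ∞) := ((hBase B).1 hB).2.1
      have hBfin : B.Finite := hfin.subset (((hBase B).1 hB).1)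
      have hJBeq : I i ∩ H = B :=
        Set.Finite.eq_of_subset_of_encard_le' hBfin hJB (hBr.trans hJr.symm).le
      exact ((hBase B).1 hB).2.2 H hH (hJBeq ▸ Set.inter_subset_right)
    -- |S| ≤ j * r
    have hS1 : S.ncard ≤ j * r := by
      have hSeq : hfin.toFinset = Finset.univ.biUnion (fun i => (hIfin i).toFinset) := by
        ext a
        simp only [Set.Finite.mem_toFinset, Finset.mem_biUnion, Finset.mem_univ, true_and]
        rw [← hE, ← hun]
        simp
      calc S.ncard = hfin.toFinset.card := Set.ncard_eq_toFinset_card S hfin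
        _ ≤ ∑ i : Fin j, (hIfin i).toFinset.card := hSeq ▸ Finset.card_biUnion_le
        _ ≤ ∑ _i : Fin j, r := Finset.sum_le_sum (fun i _ => by
            rw [← Set.ncard_eq_toFinset_card (I i) (hIfin i)]; exact hIr i)
        _ = j * r := by rw [Finset.sum_const, Finset.card_univ, Fintype.card_fin, smul_eq_mul]
    -- |H| ≤ j * (r - 1)
    have hS2 : ∀ H ∈ 𝓗, H.ncard ≤ j * (r - 1) := by
      intro H hH
      have hJfin : ∀ i, (I i ∩ H).Finite := fun i => (hIfin i).subset Set.inter_subset_left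
      have hHeq : (hHfin H hH).toFinset =
          Finset.univ.biUnion (fun i => (hJfin i).toFinset) := by
        ext a
        simp only [Set.Finite.mem_toFinset, Finset.mem_biUnion, Finset.mem_univ, true_and,
          Set.mem_inter_iff]
        constructor
        · intro ha
          have haS : a ∈ S := (h𝓗 H hH).1.subset ha
          rw [← hE, ← hun] at haS
          obtain ⟨_, ⟨i, rfl⟩, hi⟩ := haS
          exact ⟨i, hi, ha⟩
        · rintro ⟨i, -, ha⟩
          exact ha
      calc H.ncard = (hHfin H hH).toFinset.card := Set.ncard_eq_toFinset_card H (hHfin H hH)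
        _ ≤ ∑ i : Fin j, (hJfin i).toFinset.card := hHeq ▸ Finset.card_biUnion_le
        _ ≤ ∑ _i : Fin j, (r - 1) := Finset.sum_le_sum (fun i _ => by
            rw [← Set.ncard_eq_toFinset_card _ (hJfin i)]; exact hIH i H hH)
        _ = j * (r - 1) := by
            rw [Finset.sum_const, Finset.card_univ, Fintype.card_fin, smul_eq_mul]
    rw [hk]
    refine max_le ((ceil_div_le hrpos).2 hS1) ?_
    rcases Set.eq_empty_or_nonempty 𝓗 with h𝓗e | h𝓗ne
    · simp [h𝓗e]
    · refine csSup_le (h𝓗ne.image _) ?_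
      rintro b ⟨H, hH, rfl⟩
      exact (hdiv2 _ j).2 (hS2 H hH)
  exact le_antisymm (Nat.sInf_le hupper) (le_csInf ⟨k, hupper⟩ hlower)
end
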